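/- arXiv:2406.08072 — 10 statements merged into one kernel-verified Lean document; each statement's English description precedes it below -/
import Mathlib

section
/- Let μ > 0 and λ ∈ ℂ with λ ≠ 0 and λ ≠ -1/μ. Then λ²/(1+μλ) is a negative real number if and only if λ ∈ (-∞, -1/μ) or |λ + 1/μ| = 1/μ. -/
open Complex Real

theorem stmt_0 (μ : ℝ) (hμ : 0 < μ) (l : ℂ) (hl0 : l ≠ 0) (hl1 : l ≠ -(1 / μ : ℝ)) :
    (∃ r : ℝ, r < 0 ∧ l ^ 2 / (1 + (μ : ℂ) * l) = (r : ℂ)) ↔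
      ((∃ r : ℝ, r < -(1 / μ) ∧ l = (r : ℂ)) ∨ ‖l + (1 / μ : ℝ)‖ = 1 / μ) := by
  have hμ' : (μ : ℝ) ≠ 0 := ne_of_gt hμ
  have hd : (1 : ℂ) + (μ : ℂ) * l ≠ 0 := by
    intro h
    apply hl1
    have hμc : (μ : ℂ) ≠ 0 := by exact_mod_cast hμ'
    have : l = -(1 / μ : ℂ) := by
      field_simp
      linear_combination h
    rw [this]
    push_cast
    ring
  set x := l.re with hx
  set y := l.im with hy
  have hxy : x ≠ 0 ∨ y ≠ 0 := by
    by_contra h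
    push_neg at h
    exact hl0 (Complex.ext h.1 h.2)
  constructor
  · rintro ⟨r, hr, heq⟩
    rw [div_eq_iff hd] at heq
    have hre : x ^ 2 - y ^ 2 = r + r * μ * x := by
      have := congrArg Complex.re heq
      simp [pow_two, Complex.mul_re, Complex.mul_im, Complex.add_re, Complex.add_im] at this
      linarith [this]
    have him : 2 * x * y = r * μ * y := by
      have := congrArg Complex.im heq
      simp [pow_two, Complex.mul_re, Complex.mul_im, Complex.add_re, Complex.add_im] at this
      linarith [this]
    by_cases hy0 : y = 0
    · left
      refine ⟨x, ?_, ?_⟩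
      · -- x^2 = r (1 + μ x), r < 0, x ≠ 0 ⇒ 1 + μ x < 0
        have hx0 : x ≠ 0 := hxy.resolve_right (by simp [hy0])
        have h1 : x ^ 2 = r * (1 + μ * x) := by rw [hy0] at hre; nlinarith
        have h2 : 1 + μ * x < 0 := by nlinarith [(sq_nonneg x).lt_of_ne (Ne.symm (pow_ne_zero 2 hx0))]
        rw [lt_neg]
        rw [div_lt_iff₀ hμ]
        linarith [mul_comm μ x]
      · exact Complex.ext (by simp [hx]) (by simp [← hy, hy0])
    · right
      have h2x : 2 * x = r * μ := by
        have := mul_right_cancel₀ hy0 (by linarith [him] : (2 * x) * y = (r * μ) * y)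
        exact this
      have hcirc : (x + 1 / μ) ^ 2 + y ^ 2 = (1 / μ) ^ 2 := by
        have hrx : r = 2 * x / μ := by field_simp; linarith
        rw [hrx] at hre
        field_simp at hre ⊢
        nlinarith [hre]
      have : ‖l + (1 / μ : ℝ)‖ = Real.sqrt ((x + 1 / μ) ^ 2 + y ^ 2) := by
        rw [Complex.norm_def, Complex.normSq_apply]
        norm_num [hx, hy]
        ring_nf
      rw [this, hcirc, Real.sqrt_sq (by positivity)]
  · rintro (⟨r, hr, hlr⟩ | habs)
    · have hr0 : r ≠ 0 := by
        have := one_div_pos.mpr hμ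
        intro h; rw [h] at hr; linarith
      have hden : 1 + μ * r < 0 := by
        have := (div_lt_iff₀ hμ).mp (by linarith [hr] : 1 / μ < -r)
        linarith [mul_comm μ r]
      refine ⟨r ^ 2 / (1 + μ * r), by
        apply div_neg_of_pos_of_neg (by positivity) hden, ?_⟩
      rw [hlr]
      push_cast
      ring
    · -- circle case
      have hsq : (x + 1 / μ) ^ 2 + y ^ 2 = (1 / μ) ^ 2 := by
        have := congrArg (· ^ 2) habs
        simp only [Complex.sq_norm, Complex.normSq_apply, Complex.add_re,
          Complex.add_im, Complex.ofReal_re, Complex.ofReal_im, add_zero] at this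
        linear_combination this
      have hx0 : x < 0 := by
        have hpos : 0 < x ^ 2 + y ^ 2 := by
          rcases hxy with h | h
          · nlinarith [sq_nonneg y, (sq_nonneg x).lt_of_ne (Ne.symm (pow_ne_zero 2 h))]
          · nlinarith [sq_nonneg x, (sq_nonneg y).lt_of_ne (Ne.symm (pow_ne_zero 2 h))]
        have h2 : x ^ 2 + 2 * x / μ + y ^ 2 = 0 := by
          field_simp at hsq ⊢
          nlinarith [hsq]
        nlinarith [one_div_pos.mpr hμ]
      refine ⟨2 * x / μ, by
        apply div_neg_of_neg_of_pos (by linarith) hμ, ?_⟩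
      rw [div_eq_iff hd]
      apply Complex.ext
      · simp [pow_two, Complex.mul_re, Complex.mul_im]
        field_simp at hsq ⊢
        nlinarith [hsq]
      · simp [pow_two, Complex.mul_re, Complex.mul_im]
        field_simp
        ring
end

section
/- Let λ = ρ·exp(iφ) with ρ > 0 and λ ≠ -1. Then λ²/(1+λ) is a negative real number if and only if (φ = π and ρ > 1) or (2cos(φ) + ρ = 0). -/
open Complex Real

theorem stmt_1 (ρ φ : ℝ) (hρ : 0 < ρ) (hφ : φ ∈ Set.Ioc (-π) π)
    (l : ℂ) (hl : l = (ρ : ℂ) * Complex.exp (φ * Complex.I)) (hl1 : l ≠ -1) :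
    (∃ r : ℝ, r < 0 ∧ l ^ 2 / (1 + l) = (r : ℂ)) ↔
      ((φ = π ∧ 1 < ρ) ∨ 2 * Real.cos φ + ρ = 0) := by
  obtain ⟨hφ1, hφ2⟩ := hφ
  have hre : l.re = ρ * Real.cos φ := by subst hl; simp
  have him : l.im = ρ * Real.sin φ := by subst hl; simp
  have hne : (1 : ℂ) + l ≠ 0 := fun h => hl1 (by linear_combination h)
  have hpyth : Real.sin φ ^ 2 + Real.cos φ ^ 2 = 1 := Real.sin_sq_add_cos_sq φ
  have key : ∀ r : ℝ, (l ^ 2 / (1 + l) = (r : ℂ)) ↔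
      (ρ * Real.cos φ) ^ 2 - (ρ * Real.sin φ) ^ 2 = r * (1 + ρ * Real.cos φ) ∧
      2 * (ρ * Real.cos φ) * (ρ * Real.sin φ) = r * (ρ * Real.sin φ) := by
    intro r
    rw [div_eq_iff hne, Complex.ext_iff]
    simp only [pow_two, Complex.mul_re, Complex.mul_im, Complex.add_re, Complex.add_im,
      Complex.one_re, Complex.one_im, Complex.ofReal_re, Complex.ofReal_im, hre, him]
    constructor <;> rintro ⟨h1, h2⟩ <;>
      exact ⟨by linear_combination h1, by linear_combination h2⟩
  constructor
  · rintro ⟨r, hr, hrl⟩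
    rw [key] at hrl
    obtain ⟨h1, h2⟩ := hrl
    by_cases hb : Real.sin φ = 0
    · rcases (em (φ = π)) with hpi | hpi
      · left
        refine ⟨hpi, ?_⟩
        rw [hpi] at h1
        simp [Real.cos_pi, Real.sin_pi] at h1
        by_contra hρ1
        push_neg at hρ1
        rcases lt_or_eq_of_le hρ1 with h | h
        · nlinarith
        · exact hl1 (by rw [hl, h, hpi]; simp)
      · have hφ0 : φ = 0 :=
          (Real.sin_eq_zero_iff_of_lt_of_lt hφ1 (lt_of_le_of_ne hφ2 hpi)).mp hb
        rw [hφ0] at h1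
        simp at h1
        nlinarith
    · have hb' : ρ * Real.sin φ ≠ 0 := mul_ne_zero (ne_of_gt hρ) hb
      have hr2 : r = 2 * (ρ * Real.cos φ) :=
        mul_right_cancel₀ hb' (by linear_combination -h2)
      right
      have key2 : ρ * (2 * Real.cos φ + ρ) = 0 := by
        rw [hr2] at h1
        linear_combination -h1 - ρ ^ 2 * hpyth
      rcases mul_eq_zero.mp key2 with h | h
      · linarith
      · linarith
  · rintro (⟨hpi, hρ1⟩ | h)
    · have hne1 : (1 : ℝ) - ρ ≠ 0 := by intro h; linarith
      refine ⟨ρ ^ 2 / (1 - ρ), div_neg_of_pos_of_neg (by positivity) (by linarith), ?_⟩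
      rw [key, hpi, Real.cos_pi, Real.sin_pi]
      constructor
      · rw [div_mul_eq_mul_div, eq_comm, div_eq_iff hne1]; ring
      · simp
    · refine ⟨-ρ ^ 2, by nlinarith, ?_⟩
      rw [key]
      constructor
      · linear_combination ρ ^ 2 * Real.cos φ * h - ρ ^ 2 * hpyth
      · linear_combination ρ ^ 2 * Real.sin φ * h
end

section
/- Let λ be a nonzero complex number with Re λ ≥ 0 and 1 + μλ ∉ (-∞, 0], where μ > 0. Define ω_λ = √(λ²/(1+μλ)) using the principal square root. Then Re(ω_λ/λ) ≥ 0. -/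
open Complex Real

private lemma sqrt_re_im (t : ℂ) (ht : t ≠ 0) :
    (t ^ (1 / 2 : ℂ)).re = Real.exp ((Complex.log t).re / 2) * Real.cos (arg t / 2) ∧
    (t ^ (1 / 2 : ℂ)).im = Real.exp ((Complex.log t).re / 2) * Real.sin (arg t / 2) := by
  rw [Complex.cpow_def_of_ne_zero ht]
  constructor <;>
  · simp [Complex.exp_re, Complex.exp_im, Complex.mul_re, Complex.mul_im, Complex.log_im]
    ring_nf

/-- For `t` with positive real part, the principal square root has positive
real part, its imaginary part has the same sign as `t.im`, and it vanishes
only when `t.im = 0`. -/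
private lemma sqrt_facts (t : ℂ) (ht : 0 < t.re) :
    0 < (t ^ (1 / 2 : ℂ)).re ∧ 0 ≤ (t ^ (1 / 2 : ℂ)).im * t.im ∧
      ((t ^ (1 / 2 : ℂ)).im = 0 → t.im = 0) := by
  have ht0 : t ≠ 0 := fun h => by simp [h] at ht
  obtain ⟨hre, him⟩ := sqrt_re_im t ht0
  have harg : |arg t| < π / 2 := Complex.abs_arg_lt_pi_div_two_iff.2 (Or.inl ht)
  rw [abs_lt] at harg
  have hexp : 0 < Real.exp ((Complex.log t).re / 2) := Real.exp_pos _
  have hpi : 0 < π := Real.pi_pos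
  refine ⟨?_, ?_, ?_⟩
  · rw [hre]
    exact mul_pos hexp (Real.cos_pos_of_mem_Ioo ⟨by linarith [harg.1], by linarith [harg.2]⟩)
  · rcases le_or_gt 0 t.im with him0 | him0
    · have h1 : 0 ≤ arg t := Complex.arg_nonneg_iff.2 him0
      have : 0 ≤ Real.sin (arg t / 2) :=
        Real.sin_nonneg_of_nonneg_of_le_pi (by linarith) (by linarith)
      rw [him]
      positivity
    · have h1 : arg t < 0 := Complex.arg_neg_iff.2 him0
      have : Real.sin (arg t / 2) < 0 :=
        Real.sin_neg_of_neg_of_neg_pi_lt (by linarith) (by linarith)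
      rw [him]
      have hpos := mul_pos_of_neg_of_neg this him0
      nlinarith
  · intro h0
    rw [him] at h0
    have hsin : Real.sin (arg t / 2) = 0 := by
      rcases mul_eq_zero.1 h0 with h | h
      · exact absurd h (ne_of_gt hexp)
      · exact h
    have hargz : arg t = 0 := by
      by_contra hne
      rcases lt_or_gt_of_ne hne with h1 | h1
      · have : Real.sin (arg t / 2) < 0 :=
          Real.sin_neg_of_neg_of_neg_pi_lt (by linarith) (by linarith)
        linarith
      · have : 0 < Real.sin (arg t / 2) :=
          Real.sin_pos_of_pos_of_lt_pi (by linarith) (by linarith)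
        linarith
    exact (Complex.arg_eq_zero_iff.1 hargz).2

/-- The principal square root always has nonnegative real part. -/
private lemma sqrt_re_nonneg (z : ℂ) : 0 ≤ (z ^ (1 / 2 : ℂ)).re := by
  rcases eq_or_ne z 0 with rfl | hz
  · rw [Complex.zero_cpow (by norm_num)]
    simp
  · obtain ⟨hre, -⟩ := sqrt_re_im z hz
    rw [hre]
    have h1 := Complex.arg_le_pi z
    have h2 := Complex.neg_pi_lt_arg z
    have : 0 ≤ Real.cos (arg z / 2) :=
      Real.cos_nonneg_of_mem_Icc ⟨by linarith, by linarith⟩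
    positivity

private lemma sq_cpow_half (z : ℂ) (hz : z ≠ 0) : (z ^ (1 / 2 : ℂ)) ^ 2 = z := by
  rw [sq, ← Complex.cpow_add _ _ hz]
  norm_num

theorem stmt_4 (μ : ℝ) (hμ : 0 < μ) (l : ℂ) (hl0 : l ≠ 0) (hre : 0 ≤ l.re)
    (h : ¬∃ r : ℝ, r ≤ 0 ∧ 1 + (μ : ℂ) * l = (r : ℂ)) :
    0 ≤ ((l ^ 2 / (1 + (μ : ℂ) * l)) ^ (1 / 2 : ℂ) / l).re := by
  set s : ℂ := 1 + (μ : ℂ) * l with hs_def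
  have hs_re : 0 < s.re := by
    simp only [hs_def, Complex.add_re, Complex.one_re, Complex.mul_re, Complex.ofReal_re,
      Complex.ofReal_im]
    nlinarith
  have hs0 : s ≠ 0 := fun h => by simp [h] at hs_re
  set t : ℂ := s⁻¹ with ht_def
  have ht_re : 0 < t.re := by
    rw [ht_def, Complex.inv_re]
    exact div_pos hs_re (Complex.normSq_pos.2 hs0)
  obtain ⟨hure, huim, huim0⟩ := sqrt_facts t ht_re
  set u : ℂ := t ^ (1 / 2 : ℂ) with hu_def
  -- sign of t.im versus l.im
  have ht_im : t.im = -(μ * l.im) / Complex.normSq s := by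
    rw [ht_def, Complex.inv_im, hs_def]
    simp [Complex.mul_im]
  have hns : 0 < Complex.normSq s := Complex.normSq_pos.2 hs0
  have hlim_uim : l.im * u.im ≤ 0 := by
    rcases lt_trichotomy l.im 0 with h1 | h1 | h1
    · have htpos : 0 < t.im := by
        rw [ht_im]
        apply div_pos _ hns
        nlinarith
      have hu : 0 ≤ u.im := by
        by_contra hc
        push_neg at hc
        nlinarith
      nlinarith
    · rw [h1]; simp
    · have htneg : t.im < 0 := by
        rw [ht_im]
        apply div_neg_of_neg_of_pos _ hns
        nlinarith
      have hu : u.im ≤ 0 := by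
        by_contra hc
        push_neg at hc
        nlinarith
      nlinarith
  set z : ℂ := l ^ 2 / s with hz_def
  have hz0 : z ≠ 0 := by
    rw [hz_def]
    exact div_ne_zero (pow_ne_zero 2 hl0) hs0
  set w : ℂ := z ^ (1 / 2 : ℂ) with hw_def
  have hw2 : w ^ 2 = z := sq_cpow_half z hz0
  have hu2 : u ^ 2 = t := sq_cpow_half t (fun h => by simp [h] at ht_re)
  have hlu2 : (l * u) ^ 2 = z := by
    rw [mul_pow, hu2, ht_def, hz_def, div_eq_mul_inv]
  have hcases : w = l * u ∨ w = -(l * u) := by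
    have hprod : (w - l * u) * (w + l * u) = 0 := by linear_combination hw2 - hlu2
    rcases mul_eq_zero.1 hprod with h' | h'
    · exact Or.inl (sub_eq_zero.1 h')
    · exact Or.inr (eq_neg_of_add_eq_zero_left h')
  rcases hcases with hcase | hcase
  · have : w / l = u := by
      rw [hcase, mul_comm, mul_div_assoc, div_self hl0, mul_one]
    rw [this]
    exact le_of_lt hure
  · -- contradiction case
    exfalso
    have hwre : 0 ≤ w.re := sqrt_re_nonneg z
    have hlu_re : 0 ≤ (l * u).re := by
      rw [Complex.mul_re]
      nlinarith
    have hwre' : w.re = -(l * u).re := by rw [hcase]; simp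
    have h0 : (l * u).re = 0 := by linarith
    rw [Complex.mul_re] at h0
    have hlre : l.re = 0 := by nlinarith
    have hlim : l.im ≠ 0 := by
      intro h'
      exact hl0 (Complex.ext hlre h')
    rw [hlre] at h0
    have hprod0 : l.im * u.im = 0 := by linarith
    have huim_z : u.im = 0 := (mul_eq_zero.1 hprod0).resolve_left hlim
    have htim : t.im = 0 := huim0 huim_z
    rw [ht_im, div_eq_zero_iff] at htim
    rcases htim with h' | h'
    · have : μ * l.im = 0 := by linarith
      rcases mul_eq_zero.1 this with h'' | h''
      · linarith
      · exact hlim h''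
    · exact hns.ne' h'
end

section
/- Let a > 0, μ > 0 and let λ be a nonzero complex number with Re λ ≥ 0 such that λ²/(1+μλ) ∉ (-∞,0]. Set ω_λ = √(λ²/(1+μλ)). Then Re( λ(2 + 4a³/3) + 4a(μ + 1/λ) + 4a²λ/ω_λ ) ≥ 4aμ > 0; in particular this expression is nonzero. -/
open Complex Real

theorem stmt_5 (a μ : ℝ) (ha : 0 < a) (hμ : 0 < μ) (l : ℂ) (hl0 : l ≠ 0) (hre : 0 ≤ l.re)
    (h : ¬∃ r : ℝ, r ≤ 0 ∧ l ^ 2 / (1 + (μ : ℂ) * l) = (r : ℂ)) :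
    4 * a * μ ≤
        ((l * (2 + 4 * (a : ℂ) ^ 3 / 3) + 4 * (a : ℂ) * ((μ : ℂ) + 1 / l) +
            4 * (a : ℂ) ^ 2 * l / (l ^ 2 / (1 + (μ : ℂ) * l)) ^ (1 / 2 : ℂ)).re) ∧
      (0 : ℝ) < 4 * a * μ ∧
      l * (2 + 4 * (a : ℂ) ^ 3 / 3) + 4 * (a : ℂ) * ((μ : ℂ) + 1 / l) +
          4 * (a : ℂ) ^ 2 * l / (l ^ 2 / (1 + (μ : ℂ) * l)) ^ (1 / 2 : ℂ) ≠ 0 := by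
  set w : ℂ := l ^ 2 / (1 + (μ : ℂ) * l) with hw
  set ω : ℂ := w ^ (1 / 2 : ℂ) with hω
  have hl2 : 0 < l.re ^ 2 + l.im ^ 2 := by
    rcases Complex.ext_iff.not.mp hl0 with h'
    have := Complex.normSq_pos.mpr hl0
    simpa [Complex.normSq_apply, sq] using this
  -- arg w ≠ π and w ≠ 0
  have hw0 : w ≠ 0 := fun hz => h ⟨0, le_refl 0, by simpa using hz⟩
  have hargpi : w.arg ≠ π := by
    intro hp
    rcases Complex.arg_eq_pi_iff.mp hp with ⟨hwre, hwim⟩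
    exact h ⟨w.re, hwre.le, by rw [Complex.ext_iff]; simp [hwim]⟩
  have harglt : w.arg < π := lt_of_le_of_ne (Complex.arg_le_pi w) hargpi
  have harggt : -π < w.arg := Complex.neg_pi_lt_arg w
  have hhalf : (1 / 2 : ℂ) = ((1 / 2 : ℝ) : ℂ) := by norm_num
  have hωre : ω.re = ‖w‖ ^ (1 / 2 : ℝ) * Real.cos (w.arg * (1 / 2)) := by
    rw [hω, hhalf, Complex.cpow_ofReal_re]
  have hωim : ω.im = ‖w‖ ^ (1 / 2 : ℝ) * Real.sin (w.arg * (1 / 2)) := by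
    rw [hω, hhalf, Complex.cpow_ofReal_im]
  have habs : 0 < ‖w‖ ^ (1 / 2 : ℝ) :=
    Real.rpow_pos_of_pos (norm_pos_iff.mpr hw0) _
  have hωrepos : 0 < ω.re := by
    rw [hωre]
    refine mul_pos habs (Real.cos_pos_of_mem_Ioo ⟨by linarith, by linarith⟩)
  -- sign of w.im = sign of l.im
  have hd : (1 : ℂ) + (μ : ℂ) * l ≠ 0 := by
    intro hz
    have : ((1 : ℂ) + (μ : ℂ) * l).re = 0 := by rw [hz]; simp
    simp only [Complex.add_re, Complex.one_re, Complex.mul_re, Complex.ofReal_re,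
      Complex.ofReal_im] at this
    nlinarith
  have hwim : w.im = l.im * (2 * l.re + μ * (l.re ^ 2 + l.im ^ 2)) /
      Complex.normSq (1 + (μ : ℂ) * l) := by
    rw [hw, Complex.div_im]
    simp only [Complex.add_re, Complex.add_im, Complex.one_re, Complex.one_im,
      Complex.mul_re, Complex.mul_im, Complex.ofReal_re, Complex.ofReal_im, pow_two]
    ring
  have hnum : 0 < 2 * l.re + μ * (l.re ^ 2 + l.im ^ 2) := by nlinarith
  have hns : 0 < Complex.normSq (1 + (μ : ℂ) * l) := Complex.normSq_pos.mpr hd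
  -- key: l.im * ω.im ≥ 0
  have hkey : 0 ≤ l.im * ω.im := by
    rcases le_or_gt 0 l.im with hy | hy
    · have hwim0 : 0 ≤ w.im := by
        rw [hwim]; positivity
      have harg0 : 0 ≤ w.arg := Complex.arg_nonneg_iff.mpr hwim0
      have : 0 ≤ ω.im := by
        rw [hωim]
        refine mul_nonneg habs.le (Real.sin_nonneg_of_nonneg_of_le_pi (by linarith)
          (by nlinarith [Real.pi_pos]))
      exact mul_nonneg hy this
    · have hwim0 : w.im < 0 := by
        rw [hwim]
        apply div_neg_of_neg_of_pos _ hns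
        exact mul_neg_of_neg_of_pos hy hnum
      have harg0 : w.arg < 0 := Complex.arg_neg_iff.mpr hwim0
      have : ω.im ≤ 0 := by
        rw [hωim]
        refine mul_nonpos_of_nonneg_of_nonpos habs.le
          (Real.sin_nonpos_of_nonpos_of_neg_pi_le (by linarith) (by nlinarith [Real.pi_pos]))
      nlinarith
  have hω0 : ω ≠ 0 := by
    rw [hω, Ne, Complex.cpow_eq_zero_iff]
    simp [hw0]
  have hωns : 0 < Complex.normSq ω := Complex.normSq_pos.mpr hω0
  -- decompose real part
  have e1 : (l * (2 + 4 * (a : ℂ) ^ 3 / 3)).re = l.re * (2 + 4 * a ^ 3 / 3) := by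
    have : (2 + 4 * (a : ℂ) ^ 3 / 3) = ((2 + 4 * a ^ 3 / 3 : ℝ) : ℂ) := by push_cast; ring
    rw [this, mul_comm, Complex.re_ofReal_mul]; ring
  have e2 : (4 * (a : ℂ) * ((μ : ℂ) + 1 / l)).re = 4 * a * (μ + l.re / Complex.normSq l) := by
    have h4 : (4 * (a : ℂ)) = ((4 * a : ℝ) : ℂ) := by push_cast; ring
    rw [h4, Complex.re_ofReal_mul, Complex.add_re, Complex.ofReal_re, one_div, Complex.inv_re]
  have e3 : (4 * (a : ℂ) ^ 2 * l / ω).re =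
      4 * a ^ 2 * (l.re * ω.re / Complex.normSq ω + l.im * ω.im / Complex.normSq ω) := by
    have h4 : (4 * (a : ℂ) ^ 2 * l) = ((4 * a ^ 2 : ℝ) : ℂ) * l := by push_cast; ring
    rw [h4, mul_div_assoc, Complex.re_ofReal_mul, Complex.div_re]
  have hmain : 4 * a * μ ≤
      (l * (2 + 4 * (a : ℂ) ^ 3 / 3) + 4 * (a : ℂ) * ((μ : ℂ) + 1 / l) +
        4 * (a : ℂ) ^ 2 * l / ω).re := by
    rw [Complex.add_re, Complex.add_re, e1, e2, e3]
    have t1 : 0 ≤ l.re * (2 + 4 * a ^ 3 / 3) := by positivity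
    have t2 : 0 ≤ l.re / Complex.normSq l := div_nonneg hre (Complex.normSq_nonneg l)
    have t3 : 0 ≤ l.re * ω.re / Complex.normSq ω := by positivity
    have t4 : 0 ≤ l.im * ω.im / Complex.normSq ω := by positivity
    nlinarith
  refine ⟨hmain, by positivity, ?_⟩
  intro hz
  have : (l * (2 + 4 * (a : ℂ) ^ 3 / 3) + 4 * (a : ℂ) * ((μ : ℂ) + 1 / l) +
      4 * (a : ℂ) ^ 2 * l / ω).re = 0 := by rw [hz]; simp
  nlinarith
end

section
/- Let a > 0, μ > 0. There exists a finite set S ⊂ {λ ∈ ℂ : Re λ < 0} with at most four elements such that for every λ ∈ ℂ satisfying λ ∉ (-∞, -1/μ], |λ + 1/μ| ≠ 1/μ, and λ ∉ S, the 2×2 matrix M_λ (with diagonal entries λ(1+8a³/3) + 2a(μ + 1/λ) + 4a²λ/ω_λ and off-diagonal entries -λ(1-4a³/3) - 2a(μ + 1/λ), where ω_λ = √(λ²/(1+μλ))) is invertible. -/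
open Complex Real Matrix Polynomial

lemma re_half_pos {z : ℂ} (h : ¬(z.re ≤ 0 ∧ z.im = 0)) :
    0 < (z ^ (1/2 : ℂ)).re := by
  have hz : z ≠ 0 := by rintro rfl; exact h ⟨le_refl 0, rfl⟩
  have harg2 : z.arg < π := by
    refine lt_of_le_of_ne (Complex.arg_le_pi z) (fun he => ?_)
    obtain ⟨h1, h2⟩ := Complex.arg_eq_pi_iff.mp he
    exact h ⟨le_of_lt h1, h2⟩
  have harg1 : -π < z.arg := Complex.neg_pi_lt_arg z
  rw [Complex.cpow_def_of_ne_zero hz, Complex.exp_re]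
  have him : (Complex.log z * (1/2)).im = z.arg / 2 := by
    simp [Complex.mul_im, Complex.log_im]; ring
  rw [him]
  apply mul_pos (Real.exp_pos _)
  apply Real.cos_pos_of_mem_Ioo
  constructor <;> [linarith; linarith]

lemma sqrt_uniq {u w : ℂ} (h : u^2 = w^2) (hu : 0 < u.re) (hw : 0 < w.re) : u = w := by
  have h0 : (u - w) * (u + w) = 0 := by linear_combination h
  rcases mul_eq_zero.mp h0 with h' | h'
  · exact sub_eq_zero.mp h'
  · exfalso
    have := congrArg Complex.re h'
    simp [Complex.add_re] at this
    linarith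

lemma cpow_half_sq (z : ℂ) : (z ^ (1/2 : ℂ))^2 = z := by
  have := Complex.cpow_nat_inv_pow z (two_ne_zero)
  norm_num at this
  simpa using this

set_option maxHeartbeats 1000000 in
theorem stmt_7 (a μ : ℝ) (ha : 0 < a) (hμ : 0 < μ) :
    ∃ S : Finset ℂ, S.card ≤ 4 ∧ (∀ s ∈ S, s.re < 0) ∧
      ∀ l : ℂ, (¬∃ r : ℝ, r ≤ -(1 / μ) ∧ l = (r : ℂ)) →
        ‖l + (1 / μ : ℝ)‖ ≠ 1 / μ → l ∉ S →
        IsUnit (!![l * (1 + 8 * (a : ℂ) ^ 3 / 3) + 2 * (a : ℂ) * ((μ : ℂ) + 1 / l) +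
              4 * (a : ℂ) ^ 2 * l / (l ^ 2 / (1 + (μ : ℂ) * l)) ^ (1 / 2 : ℂ),
            -(l * (1 - 4 * (a : ℂ) ^ 3 / 3)) - 2 * (a : ℂ) * ((μ : ℂ) + 1 / l);
            -(l * (1 - 4 * (a : ℂ) ^ 3 / 3)) - 2 * (a : ℂ) * ((μ : ℂ) + 1 / l),
            l * (1 + 8 * (a : ℂ) ^ 3 / 3) + 2 * (a : ℂ) * ((μ : ℂ) + 1 / l) +
              4 * (a : ℂ) ^ 2 * l / (l ^ 2 / (1 + (μ : ℂ) * l)) ^ (1 / 2 : ℂ)]) := by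
  classical
  set P : Polynomial ℂ :=
    (C ((2:ℂ) + 4*(a:ℂ)^3/3) * X^2 + C (4*(a:ℂ)*(μ:ℂ)) * X + C (4*(a:ℂ)))^2
      - C (16*(a:ℂ)^4) * X^2 * (1 + C ((μ:ℂ)) * X) with hPdef
  clear_value P
  have hP0 : P ≠ 0 := by
    intro h
    have h0 := congrArg (Polynomial.eval 0) h
    rw [hPdef] at h0
    simp at h0
    exact ha.ne' h0
  have hPdeg : P.natDegree ≤ 4 := by
    rw [hPdef]; compute_degree
  refine ⟨P.roots.toFinset.filter (fun s => s.re < 0), ?_, ?_, ?_⟩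
  · calc (P.roots.toFinset.filter (fun s => s.re < 0)).card
        ≤ P.roots.toFinset.card := Finset.card_filter_le _ _
      _ ≤ Multiset.card P.roots := P.roots.toFinset_card_le
      _ ≤ P.natDegree := P.card_roots'
      _ ≤ 4 := hPdeg
  · intro s hs
    exact (Finset.mem_filter.mp hs).2
  intro l h1 h2 h3
  -- basic facts
  have hl0 : l ≠ 0 := by
    rintro rfl
    apply h2
    simp [Complex.norm_real, abs_of_pos (show (0:ℝ) < 1/μ by positivity)]
    exact hμ.le
  have hμ' : (μ:ℂ) ≠ 0 := Complex.ofReal_ne_zero.mpr hμ.ne'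
  have hden : (1:ℂ) + μ*l ≠ 0 := by
    intro h
    apply h1
    refine ⟨-(1/μ), le_refl _, ?_⟩
    push_cast
    field_simp
    linear_combination h
  -- z is not a nonpositive real
  have hznot : ¬((l^2/(1+(μ:ℂ)*l)).re ≤ 0 ∧ (l^2/(1+(μ:ℂ)*l)).im = 0) := by
    rintro ⟨hret, himt⟩
    set t := (l^2/(1+(μ:ℂ)*l)).re with ht
    have hzt : l^2/(1+(μ:ℂ)*l) = (t:ℂ) := Complex.ext (by simp [ht]) (by simp [himt])
    have htz : l^2 = (t:ℂ)*(1+(μ:ℂ)*l) := by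
      rw [div_eq_iff hden] at hzt
      linear_combination hzt
    rw [Complex.ext_iff] at htz
    obtain ⟨hre2, him2⟩ := htz
    simp [Complex.mul_re, Complex.mul_im, Complex.add_re, Complex.add_im, pow_two] at hre2 him2
    by_cases hlim : l.im = 0
    · have hgt : -(1/μ) < l.re := by
        by_contra hle
        push_neg at hle
        exact h1 ⟨l.re, hle, Complex.ext rfl (by simp [hlim])⟩
      have hlre0 : l.re ≠ 0 := fun h => hl0 (Complex.ext (by simp [h]) (by simp [hlim]))
      have h1μ : μ*(1/μ) = 1 := mul_one_div_cancel hμ.ne'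
      have hgt' : (-1:ℝ) < μ*l.re := by nlinarith [mul_lt_mul_of_pos_left hgt hμ]
      nlinarith [hre2, hret, hgt', mul_self_pos.mpr hlre0, hlim]
    · have key : 2*l.re = t*μ := by
        have h5 : (2*l.re)*l.im = (t*μ)*l.im := by linear_combination him2
        exact mul_right_cancel₀ hlim h5
      apply h2
      have h1μ : μ*(1/μ) = 1 := mul_one_div_cancel hμ.ne'
      have habs2 : ‖l + ((1/μ:ℝ):ℂ)‖^2 = (1/μ)^2 := by
        rw [Complex.sq_norm, Complex.normSq_apply]
        simp [Complex.add_re, Complex.add_im]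
        linear_combination -hre2 + (l.re + 1/μ)*key + t*h1μ
      have h6 : (‖l + ((1/μ:ℝ):ℂ)‖ - 1/μ)*(‖l + ((1/μ:ℝ):ℂ)‖ + 1/μ) = 0 := by
        linear_combination habs2
      rcases mul_eq_zero.mp h6 with h' | h'
      · linarith
      · have h7 := norm_nonneg (l + ((1/μ:ℝ):ℂ))
        have h8 : (0:ℝ) < 1/μ := by positivity
        linarith
  set z := l^2/(1+(μ:ℂ)*l) with hz
  set ω := z ^ (1/2:ℂ) with hωdef
  have hω2 : ω^2 = z := cpow_half_sq z
  have hωre : 0 < ω.re := re_half_pos hznot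
  have hω0 : ω ≠ 0 := by
    intro h; rw [h] at hωre; simp at hωre
  clear_value z ω
  rw [Matrix.isUnit_iff_isUnit_det, Matrix.det_fin_two_of, isUnit_iff_ne_zero]
  set A := l * (1 + 8 * (a : ℂ) ^ 3 / 3) + 2 * (a : ℂ) * ((μ : ℂ) + 1 / l) +
      4 * (a : ℂ) ^ 2 * l / ω with hA
  set B := -(l * (1 - 4 * (a : ℂ) ^ 3 / 3)) - 2 * (a : ℂ) * ((μ : ℂ) + 1 / l) with hB
  clear_value A B
  have ha4 : (4:ℂ)*(a:ℂ)^2 ≠ 0 := by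
    simp [Complex.ofReal_ne_zero, ha.ne']
  have hsum : A + B ≠ 0 := by
    have e1 : A + B = 4*(a:ℂ)^2*l*((a:ℂ) + 1/ω) := by
      rw [hA, hB]; field_simp; ring
    rw [e1]
    refine mul_ne_zero (mul_ne_zero ha4 hl0) ?_
    intro h
    have h9 := congrArg Complex.re h
    simp [Complex.add_re, Complex.inv_re] at h9
    nlinarith [Complex.normSq_pos.mpr hω0, div_pos hωre (Complex.normSq_pos.mpr hω0)]
  have hdiff : A - B ≠ 0 := by
    rcases le_or_gt 0 l.re with hlre | hlre
    · -- positive real part region: Re (A - B) > 0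
      set v := ((1:ℂ) + μ*l) ^ (1/2:ℂ) with hv
      clear_value v
      have hv2 : v^2 = 1 + (μ:ℂ)*l := by rw [hv]; exact cpow_half_sq _
      have hvre : 0 < v.re := by
        rw [hv]
        apply re_half_pos
        rintro ⟨h', _⟩
        simp [Complex.add_re, Complex.mul_re] at h'
        nlinarith
      have hv0 : v ≠ 0 := by intro h; rw [h] at hvre; simp at hvre
      have hvim : 2*v.re*v.im = μ*l.im := by
        have h10 := congrArg Complex.im hv2
        simp [pow_two, Complex.mul_im, Complex.add_im, Complex.mul_im] at h10
        linarith
      have hnv : 0 < Complex.normSq v := Complex.normSq_pos.mpr hv0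
      have key2 : 2*v.re*(l.im*v.im) = μ * l.im^2 := by
        linear_combination l.im * hvim
      have hlv : 0 < (l/v).re := by
        rw [Complex.div_re]
        rcases eq_or_lt_of_le hlre with h0 | h0
        · have hlim : l.im ≠ 0 := by
            intro h; exact hl0 (Complex.ext (by simp [← h0]) (by simp [h]))
          have hpos : 0 < l.im*v.im := by
            nlinarith [mul_pos hμ (mul_self_pos.mpr hlim), sq_nonneg l.im]
          rw [← h0]
          have := div_pos hpos hnv
          simpa using this
        · have hpos : 0 ≤ l.im*v.im := by
            nlinarith [mul_nonneg hμ.le (sq_nonneg l.im)]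
          have t1 : 0 < l.re * v.re / Complex.normSq v := by positivity
          have t2 : 0 ≤ l.im * v.im / Complex.normSq v := div_nonneg hpos hnv.le
          linarith
      have hveq : ω = l/v := by
        apply sqrt_uniq _ hωre hlv
        rw [hω2, div_pow, hv2, hz]
      have hlω : l/ω = v := by
        rw [hveq]
        field_simp
      intro hABeq
      have e2 : A - B = ((2 + 4*a^3/3 : ℝ):ℂ)*l + ((4*a*μ:ℝ):ℂ) + ((4*a:ℝ):ℂ)*l⁻¹ + ((4*a^2:ℝ):ℂ)*v := by
        rw [hA, hB]
        have e3 : 4*(a:ℂ)^2*l/ω = 4*(a:ℂ)^2*(l/ω) := by ring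
        rw [e3, hlω]
        push_cast
        ring
      rw [e2] at hABeq
      have h11 := congrArg Complex.re hABeq
      have ha3re : ((a:ℂ)^3).re = a^3 := by norm_cast
      have ha3im : ((a:ℂ)^3).im = 0 := by norm_cast
      have ha2re : ((a:ℂ)^2).re = a^2 := by norm_cast
      have ha2im : ((a:ℂ)^2).im = 0 := by norm_cast
      simp [Complex.add_re, Complex.mul_re, Complex.inv_re, Complex.inv_im,
        ha3re, ha3im, ha2re, ha2im] at h11
      have hnl : 0 < Complex.normSq l := Complex.normSq_pos.mpr hl0
      have hq1 : 0 ≤ (2 + 4*a^3/3) * l.re := by positivity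
      have hq2 : 0 ≤ 4*a*(l.re / Complex.normSq l) := by positivity
      nlinarith [mul_pos (mul_pos four_pos (mul_pos ha ha)) hvre, mul_pos (mul_pos four_pos ha) hμ]
    · -- negative real part: l must be a root of P
      intro hABeq
      have hQ : (((2:ℂ)+4*(a:ℂ)^3/3)*l^2 + 4*(a:ℂ)*(μ:ℂ)*l + 4*(a:ℂ))*ω + 4*(a:ℂ)^2*l^2 = 0 := by
        have e4 : (A - B)*(l*ω) = (((2:ℂ)+4*(a:ℂ)^3/3)*l^2 + 4*(a:ℂ)*(μ:ℂ)*l + 4*(a:ℂ))*ω + 4*(a:ℂ)^2*l^2 := by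
          rw [hA, hB]
          field_simp
          ring
        rw [hABeq, zero_mul] at e4
        exact e4.symm
      have hQ2 : (((2:ℂ)+4*(a:ℂ)^3/3)*l^2 + 4*(a:ℂ)*(μ:ℂ)*l + 4*(a:ℂ))^2 * ω^2 = (4*(a:ℂ)^2*l^2)^2 := by
        linear_combination ((((2:ℂ)+4*(a:ℂ)^3/3)*l^2 + 4*(a:ℂ)*(μ:ℂ)*l + 4*(a:ℂ))*ω - 4*(a:ℂ)^2*l^2) * hQ
      rw [hω2, hz] at hQ2
      have h4 : (((2:ℂ)+4*(a:ℂ)^3/3)*l^2 + 4*(a:ℂ)*(μ:ℂ)*l + 4*(a:ℂ))^2 * l^2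
          = (16*(a:ℂ)^4*l^2*(1+(μ:ℂ)*l)) * l^2 := by
        rw [mul_div_assoc', div_eq_iff hden] at hQ2
        linear_combination hQ2
      have h5 : (((2:ℂ)+4*(a:ℂ)^3/3)*l^2 + 4*(a:ℂ)*(μ:ℂ)*l + 4*(a:ℂ))^2
          = 16*(a:ℂ)^4*l^2*(1+(μ:ℂ)*l) := mul_right_cancel₀ (pow_ne_zero 2 hl0) h4
      have heval : P.eval l = 0 := by
        rw [hPdef]
        simp
        linear_combination h5
      exact h3 (Finset.mem_filter.mpr
        ⟨Multiset.mem_toFinset.mpr ((Polynomial.mem_roots hP0).mpr heval), hlre⟩)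
  intro hdet
  have hfact : (A - B)*(A + B) = 0 := by linear_combination hdet
  rcases mul_eq_zero.mp hfact with h' | h'
  · exact hdiff h'
  · exact hsum h'
end

section
/- Let a > 0, μ > 0, and suppose λ satisfies λ ∉ (-∞,-1/μ], |λ+1/μ| ≠ 1/μ, and det M_λ = 0, where M_λ and ω_λ are as above. Then λ satisfies the polynomial identity (λ²(2 + 4a³/3) + 4a(μλ + 1))² = 16a⁴λ²(1 + μλ). In particular, det M_λ vanishes for at most four such values of λ. -/
open Complex Real Matrix


theorem aux_key (a μ : ℝ) (ha : 0 < a) (hμ : 0 < μ) (l : ℂ)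
    (h1 : ¬∃ r : ℝ, r ≤ -(1 / μ) ∧ l = (r : ℂ))
    (h2 : ‖l + (1 / μ : ℝ)‖ ≠ 1 / μ)
    (hdet : (!![l * (1 + 8 * (a : ℂ) ^ 3 / 3) + 2 * (a : ℂ) * ((μ : ℂ) + 1 / l) +
            4 * (a : ℂ) ^ 2 * l / (l ^ 2 / (1 + (μ : ℂ) * l)) ^ (1 / 2 : ℂ),
          -(l * (1 - 4 * (a : ℂ) ^ 3 / 3)) - 2 * (a : ℂ) * ((μ : ℂ) + 1 / l);
          -(l * (1 - 4 * (a : ℂ) ^ 3 / 3)) - 2 * (a : ℂ) * ((μ : ℂ) + 1 / l),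
          l * (1 + 8 * (a : ℂ) ^ 3 / 3) + 2 * (a : ℂ) * ((μ : ℂ) + 1 / l) +
            4 * (a : ℂ) ^ 2 * l / (l ^ 2 / (1 + (μ : ℂ) * l)) ^ (1 / 2 : ℂ)]).det = 0) :
    (l ^ 2 * (2 + 4 * (a : ℂ) ^ 3 / 3) + 4 * (a : ℂ) * ((μ : ℂ) * l + 1)) ^ 2 =
        16 * (a : ℂ) ^ 4 * l ^ 2 * (1 + (μ : ℂ) * l) := by
  have ha' : (a : ℂ) ≠ 0 := Complex.ofReal_ne_zero.2 ha.ne'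
  have hμ' : (μ : ℂ) ≠ 0 := Complex.ofReal_ne_zero.2 hμ.ne'
  have hl : l ≠ 0 := by
    rintro rfl
    exact h2 (by simp [abs_of_pos (by positivity : (0:ℝ) < 1/μ), hμ.le])
  have hml : 1 + (μ : ℂ) * l ≠ 0 := by
    intro h
    refine h1 ⟨-(1/μ), le_refl _, ?_⟩
    push_cast
    field_simp
    linear_combination h
  set z : ℂ := l ^ 2 / (1 + (μ : ℂ) * l) with hz
  set ω : ℂ := z ^ (1 / 2 : ℂ) with hω
  have hz0 : z ≠ 0 := div_ne_zero (pow_ne_zero 2 hl) hml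
  have hω0 : ω ≠ 0 := by
    rw [hω]; simp [Complex.cpow_eq_zero_iff, hz0]
  have hω2 : ω ^ 2 = z := by
    rw [hω, sq, ← Complex.cpow_add _ _ hz0]; norm_num
  have hω2' : ω ^ 2 * (1 + (μ:ℂ) * l) = l ^ 2 := by
    rw [hω2, hz, div_mul_cancel₀ _ hml]
  have hωa : ω ≠ -(1/(a:ℂ)) := by
    intro hc
    have hzval : z = (((a⁻¹ ^ 2 : ℝ)) : ℂ) := by
      rw [← hω2, hc]; push_cast; field_simp
    have hrp : ((a⁻¹:ℝ)^2) ^ ((1:ℝ)/2) = a⁻¹ := by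
      rw [← Real.rpow_natCast a⁻¹ 2, ← Real.rpow_mul (by positivity)]
      norm_num
    have hωval : ω = ((a⁻¹ : ℝ) : ℂ) := by
      rw [hω, hzval, show ((1:ℂ)/2) = (((1:ℝ)/2 : ℝ) : ℂ) by norm_num,
        ← Complex.ofReal_cpow (by positivity), hrp]
    rw [hc] at hωval
    have : -(1:ℂ)/a = 1/a := by
      push_cast at hωval
      field_simp at hωval ⊢
      linear_combination hωval
    field_simp at this
    norm_num at this
  rw [Matrix.det_fin_two_of] at hdet
  have hfac : (l * (2 + 4 * (a:ℂ)^3/3) + 4*(a:ℂ)*((μ:ℂ) + 1/l) + 4*(a:ℂ)^2*l/ω) *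
      (4*(a:ℂ)^3*l + 4*(a:ℂ)^2*l/ω) = 0 := by
    linear_combination hdet
  rcases mul_eq_zero.1 hfac with hAB | hAB
  · have key : (l^2 * (2 + 4*(a:ℂ)^3/3) + 4*(a:ℂ)*((μ:ℂ)*l + 1)) * ω = -(4*(a:ℂ)^2*l^2) := by
      field_simp at hAB
      linear_combination hAB/3
    have hsq : (l^2 * (2 + 4*(a:ℂ)^3/3) + 4*(a:ℂ)*((μ:ℂ)*l + 1))^2 * ω^2
        = 16*(a:ℂ)^4*l^4 := by
      linear_combination ((l^2 * (2 + 4*(a:ℂ)^3/3) + 4*(a:ℂ)*((μ:ℂ)*l + 1)) * ω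
        - 4*(a:ℂ)^2*l^2) * key
    have h3 : (l^2 * (2 + 4*(a:ℂ)^3/3) + 4*(a:ℂ)*((μ:ℂ)*l + 1))^2 * l^2
        = 16*(a:ℂ)^4*l^2*(1 + (μ:ℂ)*l) * l^2 := by
      linear_combination (-(l^2 * (2 + 4*(a:ℂ)^3/3) + 4*(a:ℂ)*((μ:ℂ)*l + 1))^2) * hω2'
        + (1 + (μ:ℂ)*l) * hsq
    exact mul_right_cancel₀ (pow_ne_zero 2 hl) h3
  · exfalso
    have h4 : (4*(a:ℂ)^2*l) * ((a:ℂ)*ω + 1) = 0 := by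
      field_simp at hAB
      linear_combination hAB
    rcases mul_eq_zero.1 h4 with h | h
    · simp [ha', hl] at h
    · exact hωa (by field_simp; linear_combination h)



open Polynomial in
theorem stmt8_finite (a μ : ℝ) (ha : 0 < a) (hμ : 0 < μ)
    (S : Set ℂ)
    (hsub : ∀ l ∈ S, (l ^ 2 * (2 + 4 * (a : ℂ) ^ 3 / 3) + 4 * (a : ℂ) * ((μ : ℂ) * l + 1)) ^ 2 =
        16 * (a : ℂ) ^ 4 * l ^ 2 * (1 + (μ : ℂ) * l)) :
    S.Finite ∧ S.ncard ≤ 4 := by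
  have ha' : (a : ℂ) ≠ 0 := Complex.ofReal_ne_zero.2 ha.ne'
  set p : Polynomial ℂ :=
    (Polynomial.C (2 + 4*(a:ℂ)^3/3) * X^2 + Polynomial.C (4*(a:ℂ)) * (Polynomial.C (μ:ℂ) * X + 1))^2
      - Polynomial.C (16*(a:ℂ)^4) * X^2 * (1 + Polynomial.C (μ:ℂ) * X) with hp
  have hpev : ∀ l : ℂ, p.eval l =
      (l ^ 2 * (2 + 4 * (a : ℂ) ^ 3 / 3) + 4 * (a : ℂ) * ((μ : ℂ) * l + 1)) ^ 2
        - 16 * (a : ℂ) ^ 4 * l ^ 2 * (1 + (μ : ℂ) * l) := by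
    intro l; simp [hp]; ring
  have hp0 : p ≠ 0 := by
    intro h
    have h0 := hpev 0
    rw [h, Polynomial.eval_zero] at h0
    have h16 : (16:ℂ)*(a:ℂ)^2 = 0 := by linear_combination -h0
    exact mul_ne_zero (by norm_num) (pow_ne_zero 2 ha') h16
  have hdeg : p.natDegree ≤ 4 := by
    rw [hp]; compute_degree
  have hsub' : S ⊆ {x | p.IsRoot x} := by
    intro l hl
    simp only [Set.mem_setOf_eq, IsRoot, hpev]
    linear_combination hsub l hl
  have hfin : {x : ℂ | p.IsRoot x}.Finite := Polynomial.finite_setOf_isRoot hp0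
  refine ⟨hfin.subset hsub', ?_⟩
  calc S.ncard ≤ {x : ℂ | p.IsRoot x}.ncard := Set.ncard_le_ncard hsub' hfin
    _ ≤ 4 := by
      have he : {x : ℂ | p.IsRoot x} = ↑p.roots.toFinset := by
        ext x; simp [Polynomial.mem_roots, hp0, IsRoot]
      rw [he, Set.ncard_coe_finset]
      exact le_trans (Multiset.toFinset_card_le _)
        (le_trans (Polynomial.card_roots' p) hdeg)

theorem stmt_8 (a μ : ℝ) (ha : 0 < a) (hμ : 0 < μ) :
    (∀ l : ℂ, (¬∃ r : ℝ, r ≤ -(1 / μ) ∧ l = (r : ℂ)) →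
      ‖l + (1 / μ : ℝ)‖ ≠ 1 / μ →
      (!![l * (1 + 8 * (a : ℂ) ^ 3 / 3) + 2 * (a : ℂ) * ((μ : ℂ) + 1 / l) +
            4 * (a : ℂ) ^ 2 * l / (l ^ 2 / (1 + (μ : ℂ) * l)) ^ (1 / 2 : ℂ),
          -(l * (1 - 4 * (a : ℂ) ^ 3 / 3)) - 2 * (a : ℂ) * ((μ : ℂ) + 1 / l);
          -(l * (1 - 4 * (a : ℂ) ^ 3 / 3)) - 2 * (a : ℂ) * ((μ : ℂ) + 1 / l),
          l * (1 + 8 * (a : ℂ) ^ 3 / 3) + 2 * (a : ℂ) * ((μ : ℂ) + 1 / l) +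
            4 * (a : ℂ) ^ 2 * l / (l ^ 2 / (1 + (μ : ℂ) * l)) ^ (1 / 2 : ℂ)]).det = 0 →
      (l ^ 2 * (2 + 4 * (a : ℂ) ^ 3 / 3) + 4 * (a : ℂ) * ((μ : ℂ) * l + 1)) ^ 2 =
        16 * (a : ℂ) ^ 4 * l ^ 2 * (1 + (μ : ℂ) * l)) ∧
    ({l : ℂ | (¬∃ r : ℝ, r ≤ -(1 / μ) ∧ l = (r : ℂ)) ∧
      ‖l + (1 / μ : ℝ)‖ ≠ 1 / μ ∧
      (!![l * (1 + 8 * (a : ℂ) ^ 3 / 3) + 2 * (a : ℂ) * ((μ : ℂ) + 1 / l) +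
            4 * (a : ℂ) ^ 2 * l / (l ^ 2 / (1 + (μ : ℂ) * l)) ^ (1 / 2 : ℂ),
          -(l * (1 - 4 * (a : ℂ) ^ 3 / 3)) - 2 * (a : ℂ) * ((μ : ℂ) + 1 / l);
          -(l * (1 - 4 * (a : ℂ) ^ 3 / 3)) - 2 * (a : ℂ) * ((μ : ℂ) + 1 / l),
          l * (1 + 8 * (a : ℂ) ^ 3 / 3) + 2 * (a : ℂ) * ((μ : ℂ) + 1 / l) +
            4 * (a : ℂ) ^ 2 * l / (l ^ 2 / (1 + (μ : ℂ) * l)) ^ (1 / 2 : ℂ)]).det = 0}).Finite ∧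
    Set.ncard {l : ℂ | (¬∃ r : ℝ, r ≤ -(1 / μ) ∧ l = (r : ℂ)) ∧
      ‖l + (1 / μ : ℝ)‖ ≠ 1 / μ ∧
      (!![l * (1 + 8 * (a : ℂ) ^ 3 / 3) + 2 * (a : ℂ) * ((μ : ℂ) + 1 / l) +
            4 * (a : ℂ) ^ 2 * l / (l ^ 2 / (1 + (μ : ℂ) * l)) ^ (1 / 2 : ℂ),
          -(l * (1 - 4 * (a : ℂ) ^ 3 / 3)) - 2 * (a : ℂ) * ((μ : ℂ) + 1 / l);
          -(l * (1 - 4 * (a : ℂ) ^ 3 / 3)) - 2 * (a : ℂ) * ((μ : ℂ) + 1 / l),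
          l * (1 + 8 * (a : ℂ) ^ 3 / 3) + 2 * (a : ℂ) * ((μ : ℂ) + 1 / l) +
            4 * (a : ℂ) ^ 2 * l / (l ^ 2 / (1 + (μ : ℂ) * l)) ^ (1 / 2 : ℂ)]).det = 0} ≤ 4 := by
  refine ⟨fun l h1 h2 hdet => aux_key a μ ha hμ l h1 h2 hdet, ?_, ?_⟩
  · exact (stmt8_finite a μ ha hμ _ (fun l hl => aux_key a μ ha hμ l hl.1 hl.2.1 hl.2.2)).1
  · exact (stmt8_finite a μ ha hμ _ (fun l hl => aux_key a μ ha hμ l hl.1 hl.2.1 hl.2.2)).2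
end

section
/- Let ω ∈ ℂ with Re ω > 0 and a > 0. Define the operator R₊(ω) on functions φ on (a,∞) by (R₊(ω)φ)(x) = (1/(2ω))(∫_a^x e^{ωξ}φ(ξ)dξ)e^{-ωx} + (1/(2ω))(∫_x^∞ e^{-ωξ}φ(ξ)dξ)e^{ωx} - (1/(2ω))(∫_a^∞ e^{-ωξ}φ(ξ)dξ)e^{2ωa}e^{-ωx}. Then R₊(ω) is a bounded operator on L²(a,∞) with ‖R₊(ω)‖ ≤ 3/(2|ω| Re ω). -/
open Complex Real MeasureTheory Set

open scoped ENNReal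

namespace Stmt12Aux

lemma integrableOn_exp_neg_mul_Ioi {σ : ℝ} (hσ : 0 < σ) (c : ℝ) :
    IntegrableOn (fun t => Real.exp (-(σ * t))) (Ioi c) := by
  simpa [neg_mul] using exp_neg_integrableOn_Ioi c hσ

lemma integral_exp_neg_mul_Ioi {σ : ℝ} (hσ : 0 < σ) (c : ℝ) :
    (∫ t in Ioi c, Real.exp (-(σ * t))) = Real.exp (-(σ * c)) / σ := by
  have h := MeasureTheory.integral_comp_mul_left_Ioi (fun x => Real.exp (-x)) c hσ
  simp only [smul_eq_mul, integral_exp_neg_Ioi] at h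
  rw [h]; ring

lemma lintegral_exp_neg_mul_Ioi {σ : ℝ} (hσ : 0 < σ) (c : ℝ) :
    (∫⁻ t in Ioi c, ENNReal.ofReal (Real.exp (-(σ * t)))) =
      ENNReal.ofReal (Real.exp (-(σ * c)) / σ) := by
  rw [← ofReal_integral_eq_lintegral_ofReal (integrableOn_exp_neg_mul_Ioi hσ c)
      (ae_of_all _ fun t => (Real.exp_pos _).le), integral_exp_neg_mul_Ioi hσ c]

lemma lintegral_exp_Ioi {σ : ℝ} (hσ : 0 < σ) (c : ℝ) :
    (∫⁻ t in Ioi c, ENNReal.ofReal (Real.exp (σ * (c - t)))) = ENNReal.ofReal (1 / σ) := by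
  have h : ∀ t : ℝ, σ * (c - t) = σ * c + -(σ * t) := fun t => by ring
  simp_rw [h, Real.exp_add, ENNReal.ofReal_mul (Real.exp_pos _).le]
  rw [lintegral_const_mul' _ _ ENNReal.ofReal_ne_top, lintegral_exp_neg_mul_Ioi hσ c,
    ← ENNReal.ofReal_mul (Real.exp_pos _).le]
  congr 1
  rw [div_eq_mul_inv, ← mul_assoc, ← Real.exp_add]
  simp [one_div]

lemma exp_Iic_aux {σ : ℝ} (hσ : 0 < σ) (c : ℝ) :
    IntegrableOn (fun t => Real.exp (σ * (t - c))) (Iic c) ∧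
      (∫ t in Iic c, Real.exp (σ * (t - c))) = 1 / σ := by
  have hu_int : IntegrableOn (fun s => Real.exp (s - σ * c)) (Iic (σ * c)) := by
    simp only [Real.exp_sub]
    exact (integrableOn_exp_Iic (σ * c)).div_const _
  have hu_ind : Integrable ((Iic (σ * c)).indicator fun s => Real.exp (s - σ * c)) :=
    (integrable_indicator_iff measurableSet_Iic).2 hu_int
  have hind : ∀ t : ℝ,
      (Iic (σ * c)).indicator (fun s => Real.exp (s - σ * c)) (σ * t) =
        (Iic c).indicator (fun t => Real.exp (σ * (t - c))) t := by
    intro t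
    have hmem : σ * t ∈ Iic (σ * c) ↔ t ∈ Iic c := by
      simp only [mem_Iic]
      exact ⟨fun h => le_of_mul_le_mul_left h hσ, fun h => mul_le_mul_of_nonneg_left h hσ.le⟩
    by_cases h : t ∈ Iic c
    · rw [Set.indicator_of_mem h, Set.indicator_of_mem (hmem.2 h)]
      congr 1; ring
    · rw [Set.indicator_of_notMem h, Set.indicator_of_notMem (fun hh => h (hmem.1 hh))]
  have hInt : IntegrableOn (fun t => Real.exp (σ * (t - c))) (Iic c) := by
    rw [← integrable_indicator_iff measurableSet_Iic]
    have h2 := hu_ind.comp_mul_left' hσ.ne'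
    have h3 : (fun t => ((Iic (σ * c)).indicator fun s => Real.exp (s - σ * c)) (σ * t)) =
        (Iic c).indicator fun t => Real.exp (σ * (t - c)) := funext hind
    rwa [h3] at h2
  refine ⟨hInt, ?_⟩
  have h1 : (∫ t in Iic c, Real.exp (σ * (t - c))) =
      ∫ t, (Iic (σ * c)).indicator (fun s => Real.exp (s - σ * c)) (σ * t) := by
    simp_rw [hind]
    rw [integral_indicator measurableSet_Iic]
  have h2 := MeasureTheory.Measure.integral_comp_mul_left
    ((Iic (σ * c)).indicator fun s => Real.exp (s - σ * c)) σ
  rw [h1, h2, abs_of_pos (inv_pos.2 hσ), integral_indicator measurableSet_Iic]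
  have h3 : (∫ s in Iic (σ * c), Real.exp (s - σ * c)) = 1 := by
    simp only [Real.exp_sub]
    rw [integral_div, integral_exp_Iic, div_self (Real.exp_pos _).ne']
  rw [h3]
  simp [one_div]

lemma lintegral_exp_Iic {σ : ℝ} (hσ : 0 < σ) (c : ℝ) :
    (∫⁻ t in Iic c, ENNReal.ofReal (Real.exp (σ * (t - c)))) = ENNReal.ofReal (1 / σ) := by
  rw [← ofReal_integral_eq_lintegral_ofReal (exp_Iic_aux hσ c).1
      (ae_of_all _ fun t => (Real.exp_pos _).le), (exp_Iic_aux hσ c).2]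

lemma conj22 : Real.HolderConjugate 2 2 := ⟨by norm_num, by norm_num, by norm_num⟩

lemma schur {μ : Measure ℝ} [SFinite μ] {K : ℝ → ℝ → ℝ≥0∞}
    (hK : Measurable (Function.uncurry K)) {g : ℝ → ℝ≥0∞} (hg : Measurable g)
    {C : ℝ≥0∞} (hC : C ≠ ∞)
    (hrow : ∀ x, (∫⁻ y, K x y ∂μ) ≤ C) (hcol : ∀ y, (∫⁻ x, K x y ∂μ) ≤ C) :
    (∫⁻ x, (∫⁻ y, K x y * g y ∂μ) ^ (2 : ℝ) ∂μ) ≤ C ^ (2 : ℝ) * ∫⁻ y, g y ^ (2 : ℝ) ∂μ := by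
  have hKx : ∀ x, Measurable (K x) := fun x => hK.comp measurable_prodMk_left
  have hKy : ∀ y, Measurable (fun x => K x y) := fun y => hK.comp measurable_prodMk_right
  have step1 : ∀ x, (∫⁻ y, K x y * g y ∂μ) ^ (2 : ℝ) ≤
      (∫⁻ y, K x y ∂μ) * ∫⁻ y, K x y * g y ^ (2 : ℝ) ∂μ := by
    intro x
    have hsplit : ∀ y, K x y * g y =
        ((fun y => K x y ^ (1/2 : ℝ)) * fun y => K x y ^ (1/2 : ℝ) * g y) y := by
      intro y
      simp only [Pi.mul_apply]
      rw [← mul_assoc, ← ENNReal.rpow_add_of_nonneg _ _ (by norm_num) (by norm_num)]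
      norm_num
    have hH := ENNReal.lintegral_mul_le_Lp_mul_Lq μ conj22
      (f := fun y => K x y ^ (1/2 : ℝ)) (g := fun y => K x y ^ (1/2 : ℝ) * g y)
      ((hKx x).pow_const _).aemeasurable (((hKx x).pow_const _).mul hg).aemeasurable
    have e1 : ∀ y, (K x y ^ (1/2 : ℝ)) ^ (2 : ℝ) = K x y := by
      intro y
      rw [← ENNReal.rpow_mul]
      norm_num
    have e2 : ∀ y, (K x y ^ (1/2 : ℝ) * g y) ^ (2 : ℝ) = K x y * g y ^ (2 : ℝ) := by
      intro y
      rw [ENNReal.mul_rpow_of_nonneg _ _ (by norm_num : (0:ℝ) ≤ 2), e1]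
    simp only [← hsplit, e1, e2] at hH
    calc (∫⁻ y, K x y * g y ∂μ) ^ (2 : ℝ)
        ≤ ((∫⁻ y, K x y ∂μ) ^ (1/2 : ℝ) *
            (∫⁻ y, K x y * g y ^ (2 : ℝ) ∂μ) ^ (1/2 : ℝ)) ^ (2 : ℝ) :=
          ENNReal.rpow_le_rpow hH (by norm_num)
      _ = (∫⁻ y, K x y ∂μ) * ∫⁻ y, K x y * g y ^ (2 : ℝ) ∂μ := by
          rw [ENNReal.mul_rpow_of_nonneg _ _ (by norm_num : (0:ℝ) ≤ 2),
            ← ENNReal.rpow_mul, ← ENNReal.rpow_mul]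
          norm_num
  calc (∫⁻ x, (∫⁻ y, K x y * g y ∂μ) ^ (2 : ℝ) ∂μ)
      ≤ ∫⁻ x, C * ∫⁻ y, K x y * g y ^ (2 : ℝ) ∂μ ∂μ := by
        refine lintegral_mono fun x => (step1 x).trans ?_
        exact mul_le_mul' (hrow x) le_rfl
    _ = C * ∫⁻ x, ∫⁻ y, K x y * g y ^ (2 : ℝ) ∂μ ∂μ := lintegral_const_mul' _ _ hC
    _ = C * ∫⁻ y, ∫⁻ x, K x y * g y ^ (2 : ℝ) ∂μ ∂μ := by
        rw [lintegral_lintegral_swap]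
        exact (hK.mul ((hg.comp measurable_snd).pow_const _)).aemeasurable
    _ ≤ C * ∫⁻ y, C * g y ^ (2 : ℝ) ∂μ := by
        refine mul_le_mul' le_rfl (lintegral_mono fun y => ?_)
        rw [lintegral_mul_const _ (hKy y)]
        exact mul_le_mul' (hcol y) le_rfl
    _ = C ^ (2 : ℝ) * ∫⁻ y, g y ^ (2 : ℝ) ∂μ := by
        rw [lintegral_const_mul' _ _ hC, ← mul_assoc, ENNReal.rpow_two, sq]

lemma eLpNorm_two (f : ℝ → ℂ) (μ : Measure ℝ) :
    eLpNorm f 2 μ = (∫⁻ x, (‖f x‖₊ : ℝ≥0∞) ^ (2 : ℝ) ∂μ) ^ (1/2 : ℝ) := by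
  rw [eLpNorm_eq_lintegral_rpow_enorm_toReal two_ne_zero ENNReal.ofNat_ne_top]
  norm_num
  rfl

lemma enorm_cexp (z : ℂ) : (‖Complex.exp z‖₊ : ℝ≥0∞) = ENNReal.ofReal (Real.exp z.re) := by
  rw [← enorm_eq_nnnorm, ← ofReal_norm_eq_enorm, Complex.norm_exp]

lemma eLpNorm_le_schur {a : ℝ} {T : ℝ → ℂ} {c₀ C : ℝ≥0∞} (hc₀ : c₀ ≠ ∞) (hC : C ≠ ∞)
    {K : ℝ → ℝ → ℝ≥0∞} (hK : Measurable (Function.uncurry K)) {g : ℝ → ℝ≥0∞}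
    (hg : Measurable g)
    (hrow : ∀ x, (∫⁻ y, K x y ∂(volume.restrict (Ioi a))) ≤ C)
    (hcol : ∀ y, (∫⁻ x, K x y ∂(volume.restrict (Ioi a))) ≤ C)
    (hpt : ∀ x ∈ Ioi a, (‖T x‖₊ : ℝ≥0∞) ≤
      c₀ * ∫⁻ ξ, K x ξ * g ξ ∂(volume.restrict (Ioi a))) :
    eLpNorm T 2 (volume.restrict (Ioi a)) ≤
      c₀ * C * (∫⁻ ξ, g ξ ^ (2 : ℝ) ∂(volume.restrict (Ioi a))) ^ (1/2 : ℝ) := by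
  set μ := volume.restrict (Ioi a) with hμ
  have h1 : (∫⁻ x, (‖T x‖₊ : ℝ≥0∞) ^ (2 : ℝ) ∂μ) ≤
      c₀ ^ (2 : ℝ) * ∫⁻ x, (∫⁻ ξ, K x ξ * g ξ ∂μ) ^ (2 : ℝ) ∂μ := by
    have hc2 : c₀ ^ (2:ℝ) ≠ ∞ := by
      rw [ENNReal.rpow_two, sq]; exact ENNReal.mul_ne_top hc₀ hc₀
    rw [← lintegral_const_mul' _ _ hc2]
    refine lintegral_mono_ae ?_
    filter_upwards [ae_restrict_mem measurableSet_Ioi] with x hx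
    calc (‖T x‖₊ : ℝ≥0∞) ^ (2 : ℝ)
        ≤ (c₀ * ∫⁻ ξ, K x ξ * g ξ ∂μ) ^ (2 : ℝ) := ENNReal.rpow_le_rpow (hpt x hx) (by norm_num)
      _ = c₀ ^ (2:ℝ) * (∫⁻ ξ, K x ξ * g ξ ∂μ) ^ (2 : ℝ) :=
          ENNReal.mul_rpow_of_nonneg _ _ (by norm_num)
  have h2 := schur hK hg hC hrow hcol (μ := μ)
  rw [eLpNorm_two]
  calc (∫⁻ x, (‖T x‖₊ : ℝ≥0∞) ^ (2 : ℝ) ∂μ) ^ (1/2 : ℝ)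
      ≤ (c₀ ^ (2:ℝ) * (C ^ (2:ℝ) * ∫⁻ ξ, g ξ ^ (2 : ℝ) ∂μ)) ^ (1/2 : ℝ) := by
        exact ENNReal.rpow_le_rpow (h1.trans (mul_le_mul' le_rfl h2)) (by norm_num)
    _ = c₀ * C * (∫⁻ ξ, g ξ ^ (2 : ℝ) ∂μ) ^ (1/2 : ℝ) := by
        rw [ENNReal.mul_rpow_of_nonneg _ _ (by norm_num : (0:ℝ) ≤ 1/2),
          ENNReal.mul_rpow_of_nonneg _ _ (by norm_num : (0:ℝ) ≤ 1/2),
          ← ENNReal.rpow_mul, ← ENNReal.rpow_mul]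
        norm_num [mul_assoc]

noncomputable def K1 (σ a : ℝ) : ℝ → ℝ → ℝ≥0∞ := fun x ξ =>
  {q : ℝ × ℝ | q.2 ∈ Ioc a q.1}.indicator
    (fun q => ENNReal.ofReal (Real.exp (σ * (q.2 - q.1)))) (x, ξ)

noncomputable def K2 (σ : ℝ) : ℝ → ℝ → ℝ≥0∞ := fun x ξ =>
  {q : ℝ × ℝ | q.1 < q.2}.indicator
    (fun q => ENNReal.ofReal (Real.exp (σ * (q.1 - q.2)))) (x, ξ)

lemma measurableSet_S1 (a : ℝ) : MeasurableSet {q : ℝ × ℝ | q.2 ∈ Ioc a q.1} := by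
  have h : {q : ℝ × ℝ | q.2 ∈ Ioc a q.1} = {q : ℝ × ℝ | a < q.2} ∩ {q : ℝ × ℝ | q.2 ≤ q.1} := by
    ext q; simp [Set.mem_Ioc, Set.mem_setOf_eq]
  rw [h]
  exact (measurableSet_lt measurable_const measurable_snd).inter
    (measurableSet_le measurable_snd measurable_fst)

lemma measurableSet_S2 : MeasurableSet {q : ℝ × ℝ | q.1 < q.2} :=
  measurableSet_lt measurable_fst measurable_snd

lemma K1_eq (σ a x ξ : ℝ) :
    K1 σ a x ξ = (Ioc a x).indicator (fun t => ENNReal.ofReal (Real.exp (σ * (t - x)))) ξ := by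
  by_cases h : ξ ∈ Ioc a x
  · rw [K1, Set.indicator_of_mem h, Set.indicator_of_mem (show (x, ξ) ∈ _ from h)]
  · rw [K1, Set.indicator_of_notMem h, Set.indicator_of_notMem (show (x, ξ) ∉ _ from h)]

lemma K2_eq (σ x ξ : ℝ) :
    K2 σ x ξ = (Ioi x).indicator (fun t => ENNReal.ofReal (Real.exp (σ * (x - t)))) ξ := by
  by_cases h : ξ ∈ Ioi x
  · rw [K2, Set.indicator_of_mem h, Set.indicator_of_mem (show (x, ξ) ∈ _ from h)]
  · rw [K2, Set.indicator_of_notMem h, Set.indicator_of_notMem (show (x, ξ) ∉ _ from h)]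

lemma K1_measurable (σ a : ℝ) : Measurable (Function.uncurry (K1 σ a)) := by
  have h : Function.uncurry (K1 σ a) = {q : ℝ × ℝ | q.2 ∈ Ioc a q.1}.indicator
      (fun q => ENNReal.ofReal (Real.exp (σ * (q.2 - q.1)))) := by
    funext p; rw [Function.uncurry, K1]
  rw [h]
  exact Measurable.indicator
    ((Real.continuous_exp.comp ((continuous_snd.sub continuous_fst).const_smul σ)).measurable.ennreal_ofReal)
    (measurableSet_S1 a)

lemma K2_measurable (σ : ℝ) : Measurable (Function.uncurry (K2 σ)) := by
  have h : Function.uncurry (K2 σ) = {q : ℝ × ℝ | q.1 < q.2}.indicator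
      (fun q => ENNReal.ofReal (Real.exp (σ * (q.1 - q.2)))) := by
    funext p; rw [Function.uncurry, K2]
  rw [h]
  exact Measurable.indicator
    ((Real.continuous_exp.comp ((continuous_fst.sub continuous_snd).const_smul σ)).measurable.ennreal_ofReal)
    measurableSet_S2

lemma K1_row {σ : ℝ} (hσ : 0 < σ) (a x : ℝ) :
    (∫⁻ ξ, K1 σ a x ξ ∂(volume.restrict (Ioi a))) ≤ ENNReal.ofReal (1 / σ) := by
  simp_rw [K1_eq]
  calc (∫⁻ ξ, (Ioc a x).indicator (fun t => ENNReal.ofReal (Real.exp (σ * (t - x)))) ξ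
        ∂(volume.restrict (Ioi a)))
      ≤ ∫⁻ ξ, (Iic x).indicator (fun t => ENNReal.ofReal (Real.exp (σ * (t - x)))) ξ := by
        refine lintegral_mono' Measure.restrict_le_self (fun ξ => ?_)
        exact Set.indicator_le_indicator_of_subset Ioc_subset_Iic_self (fun t => zero_le) ξ
    _ = ∫⁻ t in Iic x, ENNReal.ofReal (Real.exp (σ * (t - x))) :=
        lintegral_indicator measurableSet_Iic _
    _ = ENNReal.ofReal (1 / σ) := lintegral_exp_Iic hσ x

lemma K1_col {σ : ℝ} (hσ : 0 < σ) (a ξ : ℝ) :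
    (∫⁻ x, K1 σ a x ξ ∂(volume.restrict (Ioi a))) ≤ ENNReal.ofReal (1 / σ) := by
  have hle : ∀ x, K1 σ a x ξ ≤
      (Ici ξ).indicator (fun x => ENNReal.ofReal (Real.exp (σ * (ξ - x)))) x := by
    intro x
    rw [K1_eq]
    by_cases h : ξ ∈ Ioc a x
    · rw [Set.indicator_of_mem h, Set.indicator_of_mem (show x ∈ Ici ξ from h.2)]
    · rw [Set.indicator_of_notMem h]; exact zero_le
  calc (∫⁻ x, K1 σ a x ξ ∂(volume.restrict (Ioi a)))
      ≤ ∫⁻ x, (Ici ξ).indicator (fun x => ENNReal.ofReal (Real.exp (σ * (ξ - x)))) x :=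
        lintegral_mono' Measure.restrict_le_self hle
    _ = ∫⁻ x in Ici ξ, ENNReal.ofReal (Real.exp (σ * (ξ - x))) :=
        lintegral_indicator measurableSet_Ici _
    _ = ∫⁻ x in Ioi ξ, ENNReal.ofReal (Real.exp (σ * (ξ - x))) := by
        rw [← Measure.restrict_congr_set Ioi_ae_eq_Ici]
    _ = ENNReal.ofReal (1 / σ) := lintegral_exp_Ioi hσ ξ

lemma K2_row {σ : ℝ} (hσ : 0 < σ) (a x : ℝ) :
    (∫⁻ ξ, K2 σ x ξ ∂(volume.restrict (Ioi a))) ≤ ENNReal.ofReal (1 / σ) := by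
  simp_rw [K2_eq]
  calc (∫⁻ ξ, (Ioi x).indicator (fun t => ENNReal.ofReal (Real.exp (σ * (x - t)))) ξ
        ∂(volume.restrict (Ioi a)))
      ≤ ∫⁻ ξ, (Ioi x).indicator (fun t => ENNReal.ofReal (Real.exp (σ * (x - t)))) ξ :=
        lintegral_mono' Measure.restrict_le_self fun ξ => le_rfl
    _ = ∫⁻ t in Ioi x, ENNReal.ofReal (Real.exp (σ * (x - t))) :=
        lintegral_indicator measurableSet_Ioi _
    _ = ENNReal.ofReal (1 / σ) := lintegral_exp_Ioi hσ x

lemma K2_col {σ : ℝ} (hσ : 0 < σ) (a ξ : ℝ) :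
    (∫⁻ x, K2 σ x ξ ∂(volume.restrict (Ioi a))) ≤ ENNReal.ofReal (1 / σ) := by
  have hle : ∀ x, K2 σ x ξ ≤
      (Iic ξ).indicator (fun x => ENNReal.ofReal (Real.exp (σ * (x - ξ)))) x := by
    intro x
    rw [K2_eq]
    by_cases h : ξ ∈ Ioi x
    · rw [Set.indicator_of_mem h, Set.indicator_of_mem (show x ∈ Iic ξ from mem_Iic.2 (le_of_lt (mem_Ioi.1 h)))]
    · rw [Set.indicator_of_notMem h]; exact zero_le
  calc (∫⁻ x, K2 σ x ξ ∂(volume.restrict (Ioi a)))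
      ≤ ∫⁻ x, (Iic ξ).indicator (fun x => ENNReal.ofReal (Real.exp (σ * (x - ξ)))) x :=
        lintegral_mono' Measure.restrict_le_self hle
    _ = ∫⁻ x in Iic ξ, ENNReal.ofReal (Real.exp (σ * (x - ξ))) :=
        lintegral_indicator measurableSet_Iic _
    _ = ENNReal.ofReal (1 / σ) := lintegral_exp_Iic hσ ξ

lemma term1_pt {ω : ℂ} (a : ℝ) (φ : ℝ → ℂ) {x : ℝ} (hx : x ∈ Ioi a) :
    (‖(1/(2*ω)) * (∫ ξ in Ioc a x, Complex.exp (ω*ξ) * φ ξ) * Complex.exp (-ω*x)‖₊ : ℝ≥0∞) ≤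
      (‖(1/(2*ω) : ℂ)‖₊ : ℝ≥0∞) *
        ∫⁻ ξ, K1 ω.re a x ξ * (‖φ ξ‖₊ : ℝ≥0∞) ∂(volume.restrict (Ioi a)) := by
  set σ := ω.re with hσdef
  have key : (∫⁻ ξ, K1 σ a x ξ * (‖φ ξ‖₊ : ℝ≥0∞) ∂(volume.restrict (Ioi a))) =
      ∫⁻ ξ in Ioc a x, ENNReal.ofReal (Real.exp (σ * (ξ - x))) * (‖φ ξ‖₊ : ℝ≥0∞) := by
    have hpt : ∀ ξ, K1 σ a x ξ * (‖φ ξ‖₊ : ℝ≥0∞) = (Ioc a x).indicator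
        (fun t => ENNReal.ofReal (Real.exp (σ * (t - x))) * (‖φ t‖₊ : ℝ≥0∞)) ξ := by
      intro ξ
      rw [K1_eq]
      by_cases h : ξ ∈ Ioc a x
      · rw [Set.indicator_of_mem h, Set.indicator_of_mem h]
      · rw [Set.indicator_of_notMem h, Set.indicator_of_notMem h, zero_mul]
    simp_rw [hpt]
    rw [lintegral_indicator measurableSet_Ioc, Measure.restrict_restrict measurableSet_Ioc,
      Set.inter_eq_self_of_subset_left Ioc_subset_Ioi_self]
  rw [key, nnnorm_mul, nnnorm_mul, ENNReal.coe_mul, ENNReal.coe_mul, mul_assoc]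
  refine mul_le_mul' le_rfl ?_
  have h1 : (‖∫ ξ in Ioc a x, Complex.exp (ω*ξ) * φ ξ‖₊ : ℝ≥0∞) ≤
      ∫⁻ ξ in Ioc a x, ENNReal.ofReal (Real.exp (σ * ξ)) * (‖φ ξ‖₊ : ℝ≥0∞) := by
    refine (enorm_integral_le_lintegral_enorm _).trans_eq ?_
    refine lintegral_congr fun ξ => ?_
    rw [enorm_eq_nnnorm, nnnorm_mul, ENNReal.coe_mul, enorm_cexp]
    congr 2
    simp [Complex.mul_re, hσdef]
  have h2 : (‖Complex.exp (-ω*x)‖₊ : ℝ≥0∞) = ENNReal.ofReal (Real.exp (-(σ * x))) := by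
    rw [enorm_cexp]
    congr 1
    simp [Complex.mul_re, hσdef]
  rw [h2]
  refine (mul_le_mul' h1 le_rfl).trans_eq ?_
  rw [← lintegral_mul_const' _ _ ENNReal.ofReal_ne_top]
  refine lintegral_congr fun ξ => ?_
  rw [mul_right_comm, ← ENNReal.ofReal_mul (Real.exp_pos _).le, ← Real.exp_add]
  have : σ * ξ + -(σ * x) = σ * (ξ - x) := by ring
  rw [this]

lemma term2_pt {ω : ℂ} (a : ℝ) (φ : ℝ → ℂ) {x : ℝ} (hx : x ∈ Ioi a) :
    (‖(1/(2*ω)) * (∫ ξ in Ioi x, Complex.exp (-ω*ξ) * φ ξ) * Complex.exp (ω*x)‖₊ : ℝ≥0∞) ≤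
      (‖(1/(2*ω) : ℂ)‖₊ : ℝ≥0∞) *
        ∫⁻ ξ, K2 ω.re x ξ * (‖φ ξ‖₊ : ℝ≥0∞) ∂(volume.restrict (Ioi a)) := by
  set σ := ω.re with hσdef
  have key : (∫⁻ ξ, K2 σ x ξ * (‖φ ξ‖₊ : ℝ≥0∞) ∂(volume.restrict (Ioi a))) =
      ∫⁻ ξ in Ioi x, ENNReal.ofReal (Real.exp (σ * (x - ξ))) * (‖φ ξ‖₊ : ℝ≥0∞) := by
    have hpt : ∀ ξ, K2 σ x ξ * (‖φ ξ‖₊ : ℝ≥0∞) = (Ioi x).indicator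
        (fun t => ENNReal.ofReal (Real.exp (σ * (x - t))) * (‖φ t‖₊ : ℝ≥0∞)) ξ := by
      intro ξ
      rw [K2_eq]
      by_cases h : ξ ∈ Ioi x
      · rw [Set.indicator_of_mem h, Set.indicator_of_mem h]
      · rw [Set.indicator_of_notMem h, Set.indicator_of_notMem h, zero_mul]
    simp_rw [hpt]
    rw [lintegral_indicator measurableSet_Ioi, Measure.restrict_restrict measurableSet_Ioi,
      Set.inter_eq_self_of_subset_left (Ioi_subset_Ioi (le_of_lt hx))]
  rw [key, nnnorm_mul, nnnorm_mul, ENNReal.coe_mul, ENNReal.coe_mul, mul_assoc]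
  refine mul_le_mul' le_rfl ?_
  have h1 : (‖∫ ξ in Ioi x, Complex.exp (-ω*ξ) * φ ξ‖₊ : ℝ≥0∞) ≤
      ∫⁻ ξ in Ioi x, ENNReal.ofReal (Real.exp (-(σ * ξ))) * (‖φ ξ‖₊ : ℝ≥0∞) := by
    refine (enorm_integral_le_lintegral_enorm _).trans_eq ?_
    refine lintegral_congr fun ξ => ?_
    rw [enorm_eq_nnnorm, nnnorm_mul, ENNReal.coe_mul, enorm_cexp]
    congr 2
    simp [Complex.mul_re, hσdef]
  have h2 : (‖Complex.exp (ω*x)‖₊ : ℝ≥0∞) = ENNReal.ofReal (Real.exp (σ * x)) := by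
    rw [enorm_cexp]
    congr 1
    simp [Complex.mul_re, hσdef]
  rw [h2]
  refine (mul_le_mul' h1 le_rfl).trans_eq ?_
  rw [← lintegral_mul_const' _ _ ENNReal.ofReal_ne_top]
  refine lintegral_congr fun ξ => ?_
  rw [mul_right_comm, ← ENNReal.ofReal_mul (Real.exp_pos _).le, ← Real.exp_add]
  have : -(σ * ξ) + σ * x = σ * (x - ξ) := by ring
  rw [this]

lemma term3_eLpNorm_le {ω : ℂ} (hω : 0 < ω.re) (a : ℝ) {φ : ℝ → ℂ}
    (hφm : AEStronglyMeasurable φ (volume.restrict (Ioi a))) :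
    eLpNorm (fun x : ℝ => (1/(2*ω)) * (∫ ξ in Ioi a, Complex.exp (-ω*ξ) * φ ξ) *
        Complex.exp (2*ω*a) * Complex.exp (-ω*x)) 2 (volume.restrict (Ioi a)) ≤
      (‖(1/(2*ω) : ℂ)‖₊ : ℝ≥0∞) * ENNReal.ofReal (1/ω.re) *
        eLpNorm φ 2 (volume.restrict (Ioi a)) := by
  set σ := ω.re with hσdef
  set μ := volume.restrict (Ioi a) with hμ
  set B : ℝ := Real.exp (-(2*σ*a)) / (2*σ) with hB
  have hBpos : 0 ≤ B := by positivity
  set J : ℂ := ∫ ξ in Ioi a, Complex.exp (-ω*ξ) * φ ξ with hJdef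
  have hsq : ∀ t : ℝ, (ENNReal.ofReal (Real.exp (-(σ*t)))) ^ (2:ℝ) =
      ENNReal.ofReal (Real.exp (-(2*σ*t))) := by
    intro t
    rw [ENNReal.ofReal_rpow_of_pos (Real.exp_pos _), ← Real.exp_mul]
    congr 2
    ring
  have hBint : (∫⁻ x, (ENNReal.ofReal (Real.exp (-(σ*x)))) ^ (2:ℝ) ∂μ) = ENNReal.ofReal B := by
    simp_rw [hsq]
    exact lintegral_exp_neg_mul_Ioi (by positivity) a
  have hJ : (‖J‖₊ : ℝ≥0∞) ≤ (ENNReal.ofReal B) ^ (1/2:ℝ) * (eLpNorm φ 2 μ) := by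
    have h1 : (‖J‖₊ : ℝ≥0∞) ≤
        ∫⁻ ξ, ((fun ξ => ENNReal.ofReal (Real.exp (-(σ*ξ)))) *
          fun ξ => (‖φ ξ‖₊ : ℝ≥0∞)) ξ ∂μ := by
      refine (enorm_integral_le_lintegral_enorm _).trans_eq ?_
      refine lintegral_congr fun ξ => ?_
      rw [enorm_eq_nnnorm, nnnorm_mul, ENNReal.coe_mul, enorm_cexp, Pi.mul_apply]
      congr 2
      simp [Complex.mul_re, hσdef]
    refine h1.trans ?_
    have hH := ENNReal.lintegral_mul_le_Lp_mul_Lq μ conj22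
      (f := fun ξ => ENNReal.ofReal (Real.exp (-(σ*ξ))))
      (g := fun ξ => (‖φ ξ‖₊ : ℝ≥0∞))
      ((Real.measurable_exp.comp ((measurable_id.const_mul σ).neg)).ennreal_ofReal).aemeasurable
      hφm.enorm
    refine hH.trans_eq ?_
    rw [hBint, eLpNorm_two φ μ]
  set D : ℂ := (1/(2*ω)) * J * Complex.exp (2*ω*a) with hD
  have hDnorm : (‖D‖₊ : ℝ≥0∞) =
      (‖(1/(2*ω) : ℂ)‖₊ : ℝ≥0∞) * (‖J‖₊ : ℝ≥0∞) * ENNReal.ofReal (Real.exp (2*σ*a)) := by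
    rw [hD, nnnorm_mul, nnnorm_mul, ENNReal.coe_mul, ENNReal.coe_mul, enorm_cexp]
    congr 2
    simp [Complex.mul_re, hσdef]
  have hstep : eLpNorm (fun x : ℝ => D * Complex.exp (-ω*x)) 2 μ =
      (‖D‖₊ : ℝ≥0∞) * (ENNReal.ofReal B) ^ (1/2:ℝ) := by
    rw [eLpNorm_two]
    have hpt : ∀ x : ℝ, (‖D * Complex.exp (-ω*x)‖₊ : ℝ≥0∞) ^ (2:ℝ) =
        (‖D‖₊ : ℝ≥0∞) ^ (2:ℝ) * (ENNReal.ofReal (Real.exp (-(σ*x)))) ^ (2:ℝ) := by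
      intro x
      rw [nnnorm_mul, ENNReal.coe_mul, ENNReal.mul_rpow_of_nonneg _ _ (by norm_num : (0:ℝ) ≤ 2)]
      congr 2
      rw [enorm_cexp]
      congr 1
      simp [Complex.mul_re, hσdef]
    simp_rw [hpt]
    rw [lintegral_const_mul' _ _ (by
      rw [ENNReal.rpow_two, sq]; exact ENNReal.mul_ne_top ENNReal.coe_ne_top ENNReal.coe_ne_top),
      hBint, ENNReal.mul_rpow_of_nonneg _ _ (by norm_num : (0:ℝ) ≤ 1/2), ← ENNReal.rpow_mul]
    norm_num
  have hBB : (ENNReal.ofReal B) ^ (1/2:ℝ) * (ENNReal.ofReal B) ^ (1/2:ℝ) = ENNReal.ofReal B := by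
    rw [← ENNReal.rpow_add_of_nonneg _ _ (by norm_num) (by norm_num)]
    norm_num
  have hfun : (fun x : ℝ => (1/(2*ω)) * (∫ ξ in Ioi a, Complex.exp (-ω*ξ) * φ ξ) *
      Complex.exp (2*ω*a) * Complex.exp (-ω*x)) = fun x : ℝ => D * Complex.exp (-ω*x) := rfl
  rw [hfun, hstep, hDnorm]
  calc (‖(1/(2*ω) : ℂ)‖₊ : ℝ≥0∞) * (‖J‖₊ : ℝ≥0∞) * ENNReal.ofReal (Real.exp (2*σ*a)) *
        (ENNReal.ofReal B) ^ (1/2:ℝ)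
      ≤ (‖(1/(2*ω) : ℂ)‖₊ : ℝ≥0∞) * ((ENNReal.ofReal B) ^ (1/2:ℝ) * (eLpNorm φ 2 μ)) *
        ENNReal.ofReal (Real.exp (2*σ*a)) * (ENNReal.ofReal B) ^ (1/2:ℝ) := by
        gcongr
    _ = (‖(1/(2*ω) : ℂ)‖₊ : ℝ≥0∞) *
        (((ENNReal.ofReal B) ^ (1/2:ℝ) * (ENNReal.ofReal B) ^ (1/2:ℝ)) *
          ENNReal.ofReal (Real.exp (2*σ*a))) * (eLpNorm φ 2 μ) := by ring
    _ = (‖(1/(2*ω) : ℂ)‖₊ : ℝ≥0∞) * ENNReal.ofReal (B * Real.exp (2*σ*a)) * (eLpNorm φ 2 μ) := by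
        rw [hBB, ← ENNReal.ofReal_mul hBpos]
    _ ≤ (‖(1/(2*ω) : ℂ)‖₊ : ℝ≥0∞) * ENNReal.ofReal (1/σ) * (eLpNorm φ 2 μ) := by
        have hBle : B * Real.exp (2*σ*a) ≤ 1/σ := by
          rw [hB, div_mul_eq_mul_div, ← Real.exp_add]
          have h0 : -(2*σ*a) + 2*σ*a = 0 := by ring
          rw [h0, Real.exp_zero, div_le_div_iff₀ (by positivity) hω]
          nlinarith
        gcongr

lemma F1_stronglyMeasurable {ω : ℂ} (a : ℝ) {φ : ℝ → ℂ} (hφm : StronglyMeasurable φ) :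
    StronglyMeasurable fun x => ∫ ξ in Ioc a x, Complex.exp (ω*ξ) * φ ξ := by
  have hf : StronglyMeasurable (fun q : ℝ × ℝ => Complex.exp (ω*q.2) * φ q.2) :=
    ((Complex.continuous_exp.comp (continuous_const.mul
      (Complex.continuous_ofReal.comp continuous_snd))).stronglyMeasurable).mul
      (hφm.comp_measurable measurable_snd)
  have hind : StronglyMeasurable fun x : ℝ => ∫ ξ : ℝ,
      ({q : ℝ × ℝ | q.2 ∈ Ioc a q.1}.indicator
        (fun q => Complex.exp (ω*q.2) * φ q.2)) (x, ξ) :=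
    StronglyMeasurable.integral_prod_right' (hf.indicator (measurableSet_S1 a))
  have heq : (fun x => ∫ ξ in Ioc a x, Complex.exp (ω*ξ) * φ ξ) = fun x : ℝ => ∫ ξ : ℝ,
      ({q : ℝ × ℝ | q.2 ∈ Ioc a q.1}.indicator
        (fun q => Complex.exp (ω*q.2) * φ q.2)) (x, ξ) := by
    funext x
    rw [← integral_indicator measurableSet_Ioc]
    congr 1
  exact heq ▸ hind

lemma F2_stronglyMeasurable {ω : ℂ} {φ : ℝ → ℂ} (hφm : StronglyMeasurable φ) :
    StronglyMeasurable fun x : ℝ => ∫ ξ in Ioi x, Complex.exp (-ω*ξ) * φ ξ := by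
  have hf : StronglyMeasurable (fun q : ℝ × ℝ => Complex.exp (-ω*q.2) * φ q.2) :=
    ((Complex.continuous_exp.comp (continuous_const.mul
      (Complex.continuous_ofReal.comp continuous_snd))).stronglyMeasurable).mul
      (hφm.comp_measurable measurable_snd)
  have hind : StronglyMeasurable fun x : ℝ => ∫ ξ : ℝ,
      ({q : ℝ × ℝ | q.1 < q.2}.indicator
        (fun q => Complex.exp (-ω*q.2) * φ q.2)) (x, ξ) :=
    StronglyMeasurable.integral_prod_right' (hf.indicator measurableSet_S2)
  have heq : (fun x : ℝ => ∫ ξ in Ioi x, Complex.exp (-ω*ξ) * φ ξ) = fun x : ℝ => ∫ ξ : ℝ,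
      ({q : ℝ × ℝ | q.1 < q.2}.indicator
        (fun q => Complex.exp (-ω*q.2) * φ q.2)) (x, ξ) := by
    funext x
    rw [← integral_indicator measurableSet_Ioi]
    congr 1
  exact heq ▸ hind

end Stmt12Aux

open Stmt12Aux

/-- The operator `R₊(ω)` from Lemma 3 of the paper, acting on functions on `(a, ∞)`. -/
noncomputable def Rplus (ω : ℂ) (a : ℝ) (φ : ℝ → ℂ) : ℝ → ℂ := fun x =>
  (1 / (2 * ω)) * (∫ ξ in Ioc a x, Complex.exp (ω * ξ) * φ ξ) * Complex.exp (-ω * x) +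
  (1 / (2 * ω)) * (∫ ξ in Ioi x, Complex.exp (-ω * ξ) * φ ξ) * Complex.exp (ω * x) -
  (1 / (2 * ω)) * (∫ ξ in Ioi a, Complex.exp (-ω * ξ) * φ ξ) *
    Complex.exp (2 * ω * a) * Complex.exp (-ω * x)

theorem stmt_12 (ω : ℂ) (hω : 0 < ω.re) (a : ℝ) (ha : 0 < a) (φ : ℝ → ℂ)
    (hφ : MemLp φ 2 (volume.restrict (Ioi a))) :
    MemLp (Rplus ω a φ) 2 (volume.restrict (Ioi a)) ∧
      eLpNorm (Rplus ω a φ) 2 (volume.restrict (Ioi a)) ≤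
        ENNReal.ofReal (3 / (2 * ‖ω‖ * ω.re)) *
          eLpNorm φ 2 (volume.restrict (Ioi a)) := by
  set μ := volume.restrict (Ioi a) with hμdef
  obtain ⟨hφae, hφfin⟩ := hφ
  set φ' := hφae.mk φ with hφ'def
  have hφ'sm : StronglyMeasurable φ' := hφae.stronglyMeasurable_mk
  have hae : φ =ᵐ[μ] φ' := hφae.ae_eq_mk
  have hNeq : eLpNorm φ 2 μ = eLpNorm φ' 2 μ := eLpNorm_congr_ae hae
  -- the three terms (with φ')
  set T1 : ℝ → ℂ := fun x =>
    (1 / (2 * ω)) * (∫ ξ in Ioc a x, Complex.exp (ω * ξ) * φ' ξ) * Complex.exp (-ω * x) with hT1def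
  set T2 : ℝ → ℂ := fun x =>
    (1 / (2 * ω)) * (∫ ξ in Ioi x, Complex.exp (-ω * ξ) * φ' ξ) * Complex.exp (ω * x) with hT2def
  set T3 : ℝ → ℂ := fun x =>
    (1 / (2 * ω)) * (∫ ξ in Ioi a, Complex.exp (-ω * ξ) * φ' ξ) *
      Complex.exp (2 * ω * a) * Complex.exp (-ω * x) with hT3def
  have hRae : Rplus ω a φ =ᵐ[μ] Rplus ω a φ' := by
    filter_upwards [ae_restrict_mem measurableSet_Ioi] with x hx
    have e1 : (∫ ξ in Ioc a x, Complex.exp (ω * ξ) * φ ξ) =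
        ∫ ξ in Ioc a x, Complex.exp (ω * ξ) * φ' ξ := by
      refine integral_congr_ae ?_
      filter_upwards [ae_restrict_of_ae_restrict_of_subset Ioc_subset_Ioi_self hae] with ξ hξ
      rw [hξ]
    have e2 : (∫ ξ in Ioi x, Complex.exp (-ω * ξ) * φ ξ) =
        ∫ ξ in Ioi x, Complex.exp (-ω * ξ) * φ' ξ := by
      refine integral_congr_ae ?_
      filter_upwards [ae_restrict_of_ae_restrict_of_subset (Ioi_subset_Ioi (le_of_lt hx)) hae]
        with ξ hξ
      rw [hξ]
    have e3 : (∫ ξ in Ioi a, Complex.exp (-ω * ξ) * φ ξ) =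
        ∫ ξ in Ioi a, Complex.exp (-ω * ξ) * φ' ξ := by
      refine integral_congr_ae ?_
      filter_upwards [hae] with ξ hξ
      rw [hξ]
    unfold Rplus
    rw [e1, e2, e3]
  have hsplit : Rplus ω a φ' = (fun x => T1 x + T2 x) - T3 := rfl
  -- measurability
  have hcexp1 : Continuous fun x : ℝ => Complex.exp (-ω * x) :=
    Complex.continuous_exp.comp (continuous_const.mul Complex.continuous_ofReal)
  have hcexp2 : Continuous fun x : ℝ => Complex.exp (ω * x) :=
    Complex.continuous_exp.comp (continuous_const.mul Complex.continuous_ofReal)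
  have hmT1 : AEStronglyMeasurable T1 μ :=
    ((stronglyMeasurable_const.mul (F1_stronglyMeasurable a hφ'sm)).mul
      hcexp1.stronglyMeasurable).aestronglyMeasurable
  have hmT2 : AEStronglyMeasurable T2 μ :=
    ((stronglyMeasurable_const.mul (F2_stronglyMeasurable hφ'sm)).mul
      hcexp2.stronglyMeasurable).aestronglyMeasurable
  have hmT3 : AEStronglyMeasurable T3 μ :=
    (stronglyMeasurable_const.mul hcexp1.stronglyMeasurable).aestronglyMeasurable
  have hmR : AEStronglyMeasurable (Rplus ω a φ') μ := by
    rw [hsplit]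
    exact (hmT1.add hmT2).sub hmT3
  -- individual bounds
  have hg : Measurable fun ξ => (‖φ' ξ‖₊ : ℝ≥0∞) := hφ'sm.measurable.enorm
  set c₀ : ℝ≥0∞ := (‖(1 / (2 * ω) : ℂ)‖₊ : ℝ≥0∞) with hc₀def
  have hb1 : eLpNorm T1 2 μ ≤ c₀ * ENNReal.ofReal (1 / ω.re) * eLpNorm φ' 2 μ := by
    have h := eLpNorm_le_schur (a := a) (T := T1) (c₀ := c₀) (C := ENNReal.ofReal (1 / ω.re))
      ENNReal.coe_ne_top ENNReal.ofReal_ne_top (K1_measurable ω.re a) hg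
      (K1_row hω a) (K1_col hω a) (fun x hx => term1_pt a φ' hx)
    rwa [← eLpNorm_two φ' μ] at h
  have hb2 : eLpNorm T2 2 μ ≤ c₀ * ENNReal.ofReal (1 / ω.re) * eLpNorm φ' 2 μ := by
    have h := eLpNorm_le_schur (a := a) (T := T2) (c₀ := c₀) (C := ENNReal.ofReal (1 / ω.re))
      ENNReal.coe_ne_top ENNReal.ofReal_ne_top (K2_measurable ω.re) hg
      (K2_row hω a) (K2_col hω a) (fun x hx => term2_pt a φ' hx)
    rwa [← eLpNorm_two φ' μ] at h
  have hb3 : eLpNorm T3 2 μ ≤ c₀ * ENNReal.ofReal (1 / ω.re) * eLpNorm φ' 2 μ :=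
    term3_eLpNorm_le hω a hφ'sm.aestronglyMeasurable
  -- triangle inequality
  have htri : eLpNorm (Rplus ω a φ') 2 μ ≤
      eLpNorm T1 2 μ + eLpNorm T2 2 μ + eLpNorm T3 2 μ := by
    rw [hsplit]
    calc eLpNorm ((fun x => T1 x + T2 x) - T3) 2 μ
        ≤ eLpNorm (fun x => T1 x + T2 x) 2 μ + eLpNorm T3 2 μ :=
          eLpNorm_sub_le (hmT1.add hmT2) hmT3 one_le_two
      _ ≤ eLpNorm T1 2 μ + eLpNorm T2 2 μ + eLpNorm T3 2 μ := by
          gcongr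
          exact eLpNorm_add_le hmT1 hmT2 one_le_two
  -- constant computation
  have hωne : ω ≠ 0 := by
    intro h0
    rw [h0] at hω
    simp at hω
  have habs : 0 < ‖ω‖ := norm_pos_iff.2 hωne
  have hc₀ : c₀ = ENNReal.ofReal (1 / (2 * ‖ω‖)) := by
    rw [hc₀def, ← enorm_eq_nnnorm, ← ofReal_norm_eq_enorm]
    congr 1
    rw [norm_div, norm_one, norm_mul, Complex.norm_two]
  have hconst : c₀ * ENNReal.ofReal (1 / ω.re) =
      ENNReal.ofReal (1 / (2 * ‖ω‖ * ω.re)) := by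
    rw [hc₀, ← ENNReal.ofReal_mul (by positivity)]
    congr 1
    rw [div_mul_div_comm, one_mul]
  have hfinal : eLpNorm (Rplus ω a φ') 2 μ ≤
      ENNReal.ofReal (3 / (2 * ‖ω‖ * ω.re)) * eLpNorm φ' 2 μ := by
    refine (htri.trans (add_le_add (add_le_add hb1 hb2) hb3)).trans ?_
    have h3 : ENNReal.ofReal (3 / (2 * ‖ω‖ * ω.re)) =
        3 * ENNReal.ofReal (1 / (2 * ‖ω‖ * ω.re)) := by
      rw [show (3 : ℝ≥0∞) = ENNReal.ofReal (3 : ℝ) by simp,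
        ← ENNReal.ofReal_mul (by norm_num)]
      congr 1
      ring
    rw [h3, hconst]
    ring_nf
    exact le_rfl
  have hRN : eLpNorm (Rplus ω a φ) 2 μ = eLpNorm (Rplus ω a φ') 2 μ := eLpNorm_congr_ae hRae
  have hbound : eLpNorm (Rplus ω a φ) 2 μ ≤
      ENNReal.ofReal (3 / (2 * ‖ω‖ * ω.re)) * eLpNorm φ 2 μ := by
    rw [hRN, hNeq]
    exact hfinal
  refine ⟨⟨hmR.congr hRae.symm, ?_⟩, hbound⟩
  refine lt_of_le_of_lt hbound ?_
  exact ENNReal.mul_lt_top ENNReal.ofReal_lt_top hφfin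
end

section
/- Let μ > 0, θ ∈ [0, π/2), and let Σ_θ = {ρ e^{iφ} : ρ > 0, φ ∈ (-π/2 - θ, π/2 + θ)}. Then for every λ ∈ Σ_θ with |λ| ≥ 4/(μ(1 - sin θ)), the quantity λ²/(1+μλ) is not a negative real number. -/
open Complex Real

theorem stmt_14 (μ θ : ℝ) (hμ : 0 < μ) (hθ : θ ∈ Set.Ico 0 (π / 2)) (l : ℂ)
    (hl : ∃ ρ φ : ℝ, 0 < ρ ∧ φ ∈ Set.Ioo (-(π / 2) - θ) (π / 2 + θ) ∧
      l = (ρ : ℂ) * Complex.exp (φ * Complex.I))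
    (habs : 4 / (μ * (1 - Real.sin θ)) ≤ ‖l‖) :
    ¬∃ r : ℝ, r < 0 ∧ l ^ 2 / (1 + (μ : ℂ) * l) = (r : ℂ) := by
  rintro ⟨r, hr, hrl⟩
  obtain ⟨ρ, φ, hρ, ⟨hφ1, hφ2⟩, rfl⟩ := hl
  obtain ⟨hθ0, hθπ⟩ := hθ
  have hπ := Real.pi_pos
  have hsθ0 : 0 ≤ Real.sin θ := Real.sin_nonneg_of_nonneg_of_le_pi hθ0 (by linarith)
  have hsθ1 : Real.sin θ < 1 := by
    have := Real.cos_pos_of_mem_Ioo (x := θ) ⟨by linarith, hθπ⟩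
    nlinarith [Real.sin_sq_add_cos_sq θ, Real.neg_one_le_sin θ]
  -- |l| = ρ
  have habsl : ‖(ρ : ℂ) * Complex.exp (φ * Complex.I)‖ = ρ := by
    rw [norm_mul, Complex.norm_exp_ofReal_mul_I, Complex.norm_real, Real.norm_eq_abs, abs_of_pos hρ, mul_one]
  rw [habsl] at habs
  have hs1 : (0:ℝ) < 1 - Real.sin θ := by linarith
  have hμρ : 4 / (1 - Real.sin θ) ≤ μ * ρ := by
    rw [div_le_iff₀ hs1]
    rw [div_le_iff₀ (mul_pos hμ hs1)] at habs
    nlinarith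
  have hμρ4 : 4 ≤ μ * ρ := le_trans (by rw [le_div_iff₀ hs1]; nlinarith) hμρ
  -- denominators
  set l : ℂ := (ρ : ℂ) * Complex.exp (φ * Complex.I) with hldef
  have hne : 1 + (μ : ℂ) * l ≠ 0 := by
    intro h
    rw [h, div_zero] at hrl
    exact absurd (Complex.ofReal_eq_zero.mp hrl.symm) (by linarith)
  have heq : l ^ 2 = (r : ℂ) * (1 + (μ : ℂ) * l) := by
    rw [div_eq_iff hne] at hrl
    linear_combination hrl
  have hre : l.re = ρ * Real.cos φ := by
    simp [hldef, Complex.mul_re, Complex.exp_ofReal_mul_I_re, Complex.exp_ofReal_mul_I_im]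
  have him : l.im = ρ * Real.sin φ := by
    simp [hldef, Complex.mul_im, Complex.exp_ofReal_mul_I_re, Complex.exp_ofReal_mul_I_im]
  set a := l.re with ha
  set b := l.im with hb
  have h1 : a ^ 2 - b ^ 2 = r * (1 + μ * a) := by
    have := congrArg Complex.re heq
    simp [pow_two, Complex.mul_re, Complex.mul_im, Complex.add_re, Complex.add_im] at this
    ring_nf at this ⊢
    linarith
  have h2 : 2 * a * b = r * μ * b := by
    have := congrArg Complex.im heq
    simp [pow_two, Complex.mul_re, Complex.mul_im, Complex.add_re, Complex.add_im] at this
    ring_nf at this ⊢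
    linarith
  by_cases hb0 : b = 0
  · -- l is real; sin φ = 0 so φ = 0, a = ρ > 0
    have hsφ : Real.sin φ = 0 := by
      rw [him] at hb0
      rcases mul_eq_zero.mp hb0 with h | h
      · linarith
      · exact h
    have hφ0 : φ = 0 := by
      rw [Real.sin_eq_zero_iff_of_lt_of_lt (by linarith) (by linarith)] at hsφ
      exact hsφ
    have haρ : a = ρ := by rw [hre, hφ0, Real.cos_zero, mul_one]
    rw [hb0, haρ] at h1
    nlinarith
  · have ha2 : a = r * μ / 2 := by
      have : (2 * a - r * μ) * b = 0 := by ring_nf; linarith [h2]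
      rcases mul_eq_zero.mp this with h | h
      · linarith
      · exact absurd h hb0
    have hab : a ^ 2 + b ^ 2 = ρ ^ 2 := by
      rw [hre, him]
      nlinarith [Real.sin_sq_add_cos_sq φ]
    have hrρ : r = -(ρ ^ 2) := by linear_combination -h1 - hab + 2*a*ha2
    have hcos : Real.cos φ = -(μ * ρ) / 2 := by
      have h5 : ρ * Real.cos φ = r * μ / 2 := by rw [← hre]; exact ha2
      rw [hrρ] at h5
      have h6 : ρ * Real.cos φ = ρ * (-(μ * ρ) / 2) := by rw [h5]; ring
      exact mul_left_cancel₀ (ne_of_gt hρ) h6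
    have hcosgt : -Real.sin θ < Real.cos φ := by
      have habsφ : |φ| < π / 2 + θ := abs_lt.mpr ⟨by linarith, hφ2⟩
      have := Real.cos_lt_cos_of_nonneg_of_le_pi (abs_nonneg φ) (by linarith) habsφ
      rw [Real.cos_abs, add_comm, Real.cos_add_pi_div_two] at this
      linarith
    rw [hcos] at hcosgt
    linarith
end

section
/- Let μ > 0, θ ∈ [0, π/2), Σ_θ = {ρ e^{iφ} : ρ > 0, φ ∈ (-π/2 - θ, π/2 + θ)}. Then for every λ ∈ Σ_θ with |λ| ≥ 4/(μ(1 - sin θ)), one has Re √(λ²/(1+μλ)) ≥ (1/4)·√(|λ|(1 - sin θ)/μ). -/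
open Complex Real

set_option maxHeartbeats 800000

lemma re_cpow_half (w : ℂ) (hw : w ≠ 0) :
    (w ^ (1/2 : ℂ)).re = Real.sqrt ((‖w‖ + w.re) / 2) := by
  have habs : 0 < ‖w‖ := norm_pos_iff.mpr hw
  rw [Complex.cpow_def_of_ne_zero hw, Complex.exp_re]
  have h1 : (Complex.log w * (1/2)).re = Real.log ‖w‖ / 2 := by
    simp [Complex.mul_re, Complex.log_re, Complex.log_im]
    ring
  have h2 : (Complex.log w * (1/2)).im = Complex.arg w / 2 := by
    simp [Complex.mul_im, Complex.log_re, Complex.log_im]; ring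
  rw [h1, h2]
  have h3 : Real.exp (Real.log ‖w‖ / 2) = Real.sqrt ‖w‖ := by
    rw [Real.sqrt_eq_rpow, Real.rpow_def_of_pos habs]; ring_nf
  have h4 : Real.cos (Complex.arg w / 2) = Real.sqrt ((1 + Real.cos (Complex.arg w)) / 2) :=
    Real.cos_half (by linarith [Complex.neg_pi_lt_arg w]) (Complex.arg_le_pi w)
  rw [h3, h4, Complex.cos_arg hw, ← Real.sqrt_mul habs.le]
  congr 1
  field_simp

lemma key_ineq (s c t E : ℝ) (hs0 : 0 ≤ s) (hs1 : s ≤ 1) (hc : -s ≤ c) (hc1 : c ≤ 1)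
    (ht : 4 ≤ t * (1 - s)) (hE : t + c ≤ E) :
    2 * (1 - s) * (1 + 2*t*c + t^2) ≤ 16 * t * (E + (2*c^2 - 1 + t*c)) := by
  have ht0 : 0 < t := by nlinarith
  have ht4 : 4 ≤ t := by nlinarith
  nlinarith [mul_nonneg ht0.le (sq_nonneg c), mul_nonneg (mul_nonneg ht0.le ht0.le) hs0,
    mul_le_mul_of_nonneg_left hE (by linarith : (0:ℝ) ≤ 16*t),
    mul_nonneg ht0.le hs0, sq_nonneg (t - 4), sq_nonneg (t*(1-s) - 4),
    mul_nonneg (mul_nonneg ht0.le ht0.le) (by linarith : 0 ≤ 1 - s),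
    mul_le_mul_of_nonneg_left hc (by positivity : (0:ℝ) ≤ 16*t^2)]

theorem stmt_15 (μ θ : ℝ) (hμ : 0 < μ) (hθ : θ ∈ Set.Ico 0 (π / 2)) (l : ℂ)
    (hl : ∃ ρ φ : ℝ, 0 < ρ ∧ φ ∈ Set.Ioo (-(π / 2) - θ) (π / 2 + θ) ∧
      l = (ρ : ℂ) * Complex.exp (φ * Complex.I))
    (habs : 4 / (μ * (1 - Real.sin θ)) ≤ ‖l‖) :
    (1 / 4) * Real.sqrt (‖l‖ * (1 - Real.sin θ) / μ) ≤
      ((l ^ 2 / (1 + (μ : ℂ) * l)) ^ (1 / 2 : ℂ)).re := by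
  obtain ⟨ρ, φ, hρ, hφ, rfl⟩ := hl
  have hpi := Real.pi_pos
  set s := Real.sin θ with hs
  set c := Real.cos φ with hcdef
  have hs0 : 0 ≤ s := Real.sin_nonneg_of_nonneg_of_le_pi hθ.1 (by linarith [hθ.2])
  have hs1 : s < 1 := by
    have h := Real.sin_lt_sin_of_lt_of_le_pi_div_two (by linarith [hθ.1] : -(π/2) ≤ θ)
      (le_refl (π/2)) hθ.2
    simpa using h
  have habsl : ‖(ρ : ℂ) * Complex.exp (φ * Complex.I)‖ = ρ := by
    rw [norm_mul, Complex.norm_exp_ofReal_mul_I, Complex.norm_real, Real.norm_eq_abs, abs_of_pos hρ, mul_one]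
  rw [habsl] at habs ⊢
  have hc : -s ≤ c := by
    have h1 : |φ| < π/2 + θ := abs_lt.mpr ⟨by linarith [hφ.1], hφ.2⟩
    have h2 : Real.cos (π/2 + θ) ≤ Real.cos |φ| :=
      Real.cos_le_cos_of_nonneg_of_le_pi (abs_nonneg φ) (by linarith [hθ.2]) h1.le
    rw [Real.cos_abs, Real.cos_add] at h2
    simp at h2
    linarith
  have hc1 : c ≤ 1 := Real.cos_le_one φ
  have hcm1 : -1 ≤ c := Real.neg_one_le_cos φ
  have ht : 4 ≤ μ * ρ * (1 - s) := by
    rw [div_le_iff₀ (by nlinarith : 0 < μ * (1 - s))] at habs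
    nlinarith
  have ht0 : 0 < μ * ρ := by nlinarith
  have ht4 : 4 ≤ μ * ρ := by nlinarith
  have hDpos : 0 < 1 + 2*(μ*ρ)*c + (μ*ρ)^2 := by nlinarith [sq_nonneg (μ*ρ - 1)]
  set E := Real.sqrt (1 + 2*(μ*ρ)*c + (μ*ρ)^2) with hEdef
  have hE2 : E^2 = 1 + 2*(μ*ρ)*c + (μ*ρ)^2 := Real.sq_sqrt hDpos.le
  have hEpos : 0 < E := Real.sqrt_pos.mpr hDpos
  have hE : μ*ρ + c ≤ E := by
    rw [hEdef, Real.le_sqrt (by linarith) hDpos.le]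
    nlinarith [Real.sin_sq_add_cos_sq φ]
  have hlre : ((ρ : ℂ) * Complex.exp (φ * Complex.I)).re = ρ * c := by
    simp [Complex.mul_re, Complex.exp_ofReal_mul_I_re, Complex.exp_ofReal_mul_I_im, hcdef]
  have hlim : ((ρ : ℂ) * Complex.exp (φ * Complex.I)).im = ρ * Real.sin φ := by
    simp [Complex.mul_im, Complex.exp_ofReal_mul_I_re, Complex.exp_ofReal_mul_I_im]
  set l := (ρ : ℂ) * Complex.exp (φ * Complex.I) with hldef
  have hdre : (1 + (μ : ℂ) * l).re = 1 + μ*ρ * c := by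
    rw [Complex.add_re, Complex.mul_re, hlre, hlim]
    simp; ring
  have hdim : (1 + (μ : ℂ) * l).im = μ*ρ * Real.sin φ := by
    rw [Complex.add_im, Complex.mul_im, hlre, hlim]
    simp; ring
  have hnsq : Complex.normSq (1 + (μ : ℂ) * l) = 1 + 2*(μ*ρ)*c + (μ*ρ)^2 := by
    rw [Complex.normSq_apply, hdre, hdim]
    nlinarith [Real.sin_sq_add_cos_sq φ]
  have hd0 : (1 + (μ : ℂ) * l) ≠ 0 := by
    rw [← Complex.normSq_pos, hnsq]; exact hDpos
  have hl0 : l ≠ 0 := by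
    intro h
    rw [h, norm_zero] at habsl
    linarith
  have hw0 : l ^ 2 / (1 + (μ : ℂ) * l) ≠ 0 := div_ne_zero (pow_ne_zero 2 hl0) hd0
  rw [re_cpow_half _ hw0]
  have habsw : ‖l ^ 2 / (1 + (μ : ℂ) * l)‖ = ρ^2 / E := by
    rw [norm_div, norm_pow, habsl, hEdef, ← hnsq, Complex.norm_def]
  have hsq : Real.sin φ ^ 2 = 1 - c^2 := by
    nlinarith [Real.sin_sq_add_cos_sq φ]
  have hwre : (l ^ 2 / (1 + (μ : ℂ) * l)).re
      = ρ^2 * (2*c^2 - 1 + μ*ρ*c) / (1 + 2*(μ*ρ)*c + (μ*ρ)^2) := by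
    have h2re : (l^2).re = (ρ*c)^2 - (ρ*Real.sin φ)^2 := by
      rw [pow_two, Complex.mul_re, hlre, hlim]; ring
    have h2im : (l^2).im = 2 * (ρ*c) * (ρ*Real.sin φ) := by
      rw [pow_two, Complex.mul_im, hlre, hlim]; ring
    rw [Complex.div_re, hnsq, h2re, h2im, hdre, hdim]
    field_simp [hDpos.ne']
    congr 1
    linear_combination (ρ*c*μ - 1) * hsq
  rw [habsw, hwre]
  have hlhs : (1/4 : ℝ) * Real.sqrt (ρ * (1 - s) / μ) =
      Real.sqrt (ρ * (1 - s) / μ / 16) := by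
    rw [show ρ * (1 - s) / μ / 16 = (1/4:ℝ)^2 * (ρ * (1 - s) / μ) by ring,
      Real.sqrt_mul (by norm_num), Real.sqrt_sq (by norm_num)]
  rw [hlhs]
  apply Real.sqrt_le_sqrt
  have hEq : ρ^2 / E + ρ^2 * (2*c^2 - 1 + μ*ρ*c) / (1 + 2*(μ*ρ)*c + (μ*ρ)^2)
      = ρ^2 * (E + (2*c^2 - 1 + μ*ρ*c)) / (1 + 2*(μ*ρ)*c + (μ*ρ)^2) := by
    field_simp [hDpos.ne', hEpos.ne']
    have hD' : (1 + ρ * 2 * c * μ + ρ ^ 2 * μ ^ 2) ≠ 0 := (by linarith [hDpos] : (0:ℝ) < _).ne'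
    rw [eq_div_iff hD', add_mul, div_mul_cancel₀ _ hD']
    linear_combination (-1) * hE2
  rw [hEq]
  have key := key_ineq s c (μ*ρ) E hs0 hs1.le hc hc1 ht hE
  rw [div_div, div_div, div_le_div_iff₀ (by positivity) (by positivity)]
  nlinarith [mul_le_mul_of_nonneg_left key hρ.le]
end

section
/- Let θ ∈ [0, π/2), ρ ≥ 4/(1 - sin θ), and φ ∈ (-π/2 - θ, π/2 + θ). Then √(1 + ρ² + 2ρ cos φ) + cos(2φ) + ρ cos φ ≥ (1/2)·ρ·(1 - sin θ). -/
open Real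

theorem stmt_16 (θ ρ φ : ℝ) (hθ : θ ∈ Set.Ico 0 (π / 2))
    (hρ : 4 / (1 - Real.sin θ) ≤ ρ) (hφ : φ ∈ Set.Ioo (-(π / 2) - θ) (π / 2 + θ)) :
    (1 / 2) * ρ * (1 - Real.sin θ) ≤
      Real.sqrt (1 + ρ ^ 2 + 2 * ρ * Real.cos φ) + Real.cos (2 * φ) + ρ * Real.cos φ := by
  obtain ⟨hθ0, hθ1⟩ := hθ
  obtain ⟨hφ1, hφ2⟩ := hφ
  have hs0 : 0 ≤ Real.sin θ := Real.sin_nonneg_of_nonneg_of_le_pi hθ0 (by linarith [Real.pi_pos])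
  have hs1 : Real.sin θ < 1 := by
    have := Real.sin_lt_sin_of_lt_of_le_pi_div_two (by linarith [Real.pi_pos]) le_rfl hθ1
    simpa using this
  have h1s : 0 < 1 - Real.sin θ := by linarith
  have hρ4 : 4 ≤ ρ * (1 - Real.sin θ) := by
    rw [div_le_iff₀ h1s] at hρ; linarith
  have hρ1 : 1 ≤ ρ := by nlinarith
  -- cos φ ≥ -sin θ
  have habs : |φ| < π / 2 + θ := abs_lt.mpr ⟨by linarith, hφ2⟩
  have hcos : -Real.sin θ < Real.cos φ := by
    have h1 : Real.cos (π / 2 + θ) < Real.cos |φ| :=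
      Real.cos_lt_cos_of_nonneg_of_le_pi (abs_nonneg φ) (by linarith [Real.pi_pos]) habs
    rw [Real.cos_abs] at h1
    have h2 : Real.cos (π / 2 + θ) = -Real.sin θ := by
      rw [add_comm, Real.cos_add_pi_div_two]
    linarith
  have hsqrt : ρ - 1 ≤ Real.sqrt (1 + ρ ^ 2 + 2 * ρ * Real.cos φ) := by
    rw [show ρ - 1 = Real.sqrt ((ρ - 1) ^ 2) by rw [Real.sqrt_sq (by linarith)]]
    apply Real.sqrt_le_sqrt
    nlinarith [hcos, hs0]
  have hc2 : -1 ≤ Real.cos (2 * φ) := Real.neg_one_le_cos _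
  nlinarith [hcos, hs0, hρ4]
end
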